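/- arXiv:2406.14104 — 3 statements merged into one kernel-verified Lean document; each statement's English description precedes it below -/
import Mathlib

section
/- Let x ∈ J with ‖x‖_J = 1. If ‖x‖₂ = 1 (where ‖·‖₂ is the ℓ² norm), then x is an extreme point of the closed unit ball of J. -/
open Filter Topology Classical

noncomputable section

/-- Admissible finite families of pairwise disjoint, increasingly ordered intervals
`[f i .1, f i .2]` of `ℕ`. -/
def Admissible (n : ℕ) (f : Fin n → ℕ × ℕ) : Prop :=
  (∀ i, (f i).1 ≤ (f i).2) ∧ ∀ i j : Fin n, i < j → (f i).2 < (f j).1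

/-- The set of estimates appearing in the definition of the James norm. -/
def estimates (x : ℕ → ℝ) : Set ℝ :=
  {r | ∃ n, ∃ f : Fin n → ℕ × ℕ, Admissible n f ∧
    r = Real.sqrt (∑ i, (∑ k ∈ Finset.Icc (f i).1 (f i).2, x k) ^ 2)}

/-- `x` belongs to the James space `J`. -/
def MemJ (x : ℕ → ℝ) : Prop := BddAbove (estimates x)

/-- The James norm. -/
def jamesNorm (x : ℕ → ℝ) : ℝ := sSup (estimates x)

/-- The ℓ² norm. -/
def l2Norm (x : ℕ → ℝ) : ℝ := Real.sqrt (∑' k, (x k) ^ 2)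

/-- The closed unit ball of the James space. -/
def ballJ : Set (ℕ → ℝ) := {x | MemJ x ∧ jamesNorm x ≤ 1}

/-- The support of a sequence. -/
def supp (x : ℕ → ℝ) : Set ℕ := {n | x n ≠ 0}

/-- The (possibly infinite) sum of `x` over a subset `I` of `ℕ`,
as the limit of the partial sums. -/
def setSum (x : ℕ → ℝ) (I : Set ℕ) : ℝ :=
  limUnder atTop (fun N => ∑ k ∈ Finset.range N, if k ∈ I then x k else 0)

/-- An `x`-norming family: a (finite or infinite) family of pairwise disjoint
nonempty intervals of `ℕ`, indexed by an initial segment `F` of `ℕ`, ordered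
increasingly, whose interval sums exist and realize the James norm of `x`. -/
structure NormingFamily (x : ℕ → ℝ) where
  F : Set ℕ
  F_nonempty : F.Nonempty
  initial : ∀ ⦃m n : ℕ⦄, m ≤ n → n ∈ F → m ∈ F
  I : ℕ → Set ℕ
  I_nonempty : ∀ i ∈ F, (I i).Nonempty
  I_interval : ∀ i ∈ F, (I i).OrdConnected
  ordered : ∀ i ∈ F, ∀ j ∈ F, i < j → ∀ a ∈ I i, ∀ b ∈ I j, a < b
  sums_exist : ∀ i ∈ F, ∃ l : ℝ,
    Tendsto (fun N => ∑ k ∈ Finset.range N, if k ∈ I i then x k else 0) atTop (𝓝 l)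
  norming : ∑' i : F, (setSum x (I i)) ^ 2 = (jamesNorm x) ^ 2

/-- An `x`-norming partition: an `x`-norming family whose intervals cover the
support of `x`, every interval has its minimum in the support, every non-final
interval has its maximum in the support, and the final interval does not extend
beyond the supremum of the support. -/
structure NormingPartition (x : ℕ → ℝ) extends NormingFamily x where
  covers : supp x ⊆ ⋃ i ∈ F, I i
  min_in_supp : ∀ i ∈ F, ∃ m ∈ I i ∩ supp x, ∀ k ∈ I i, m ≤ k
  max_in_supp : ∀ i ∈ F, (∃ j ∈ F, i < j) → ∃ m ∈ I i ∩ supp x, ∀ k ∈ I i, k ≤ m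
  bounded_by_supp : ∀ i ∈ F, ∀ k ∈ I i, ∃ m ∈ supp x, k ≤ m

/-- `n₁ < n₂` are consecutive elements of the support of `x`. -/
def Consecutive (x : ℕ → ℝ) (n₁ n₂ : ℕ) : Prop :=
  n₁ ∈ supp x ∧ n₂ ∈ supp x ∧ n₁ < n₂ ∧ ∀ k, n₁ < k → k < n₂ → x k = 0

end

noncomputable section AuxStmt2

lemma zero_mem_estimates (y : ℕ → ℝ) : (0:ℝ) ∈ estimates y :=
  ⟨0, fun i => i.elim0, ⟨fun i => i.elim0, fun i => i.elim0⟩, by simp⟩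

lemma jamesNorm_nonneg' (y : ℕ → ℝ) (hy : MemJ y) : 0 ≤ jamesNorm y :=
  le_csSup hy (zero_mem_estimates y)

lemma sum_range_sq_le (y : ℕ → ℝ) (hy : MemJ y) (N : ℕ) :
    ∑ k ∈ Finset.range N, y k ^ 2 ≤ (jamesNorm y) ^ 2 := by
  have hmem : Real.sqrt (∑ k ∈ Finset.range N, y k ^ 2) ∈ estimates y := by
    refine ⟨N, fun i => ((i : ℕ), (i : ℕ)), ⟨fun i => le_rfl, fun i j hij => hij⟩, ?_⟩
    congr 1
    rw [← Fin.sum_univ_eq_sum_range (fun k => y k ^ 2) N]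
    simp
  have hle : Real.sqrt (∑ k ∈ Finset.range N, y k ^ 2) ≤ jamesNorm y :=
    le_csSup hy hmem
  have hnn : (0:ℝ) ≤ ∑ k ∈ Finset.range N, y k ^ 2 :=
    Finset.sum_nonneg fun k _ => sq_nonneg _
  calc ∑ k ∈ Finset.range N, y k ^ 2
      = Real.sqrt (∑ k ∈ Finset.range N, y k ^ 2) ^ 2 := (Real.sq_sqrt hnn).symm
    _ ≤ (jamesNorm y) ^ 2 := by
        apply pow_le_pow_left₀ (Real.sqrt_nonneg _) hle

lemma summable_sq_of_memJ (y : ℕ → ℝ) (hy : MemJ y) : Summable (fun k => y k ^ 2) :=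
  summable_of_sum_range_le (fun k => sq_nonneg _) (sum_range_sq_le y hy)

lemma tsum_sq_le_of_memJ (y : ℕ → ℝ) (hy : MemJ y) :
    ∑' k, y k ^ 2 ≤ (jamesNorm y) ^ 2 :=
  Summable.tsum_le_of_sum_range_le (summable_sq_of_memJ y hy) (sum_range_sq_le y hy)

end AuxStmt2

theorem stmt2 (x : ℕ → ℝ) (hx : MemJ x) (h1 : jamesNorm x = 1) (h2 : l2Norm x = 1) :
    x ∈ Set.extremePoints ℝ ballJ := by
  refine ⟨⟨hx, h1.le⟩, ?_⟩
  rintro y ⟨hy, hyn⟩ z ⟨hz, hzn⟩ hseg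
  obtain ⟨a, b, ha, hb, hab, hxyz⟩ := hseg
  have hySum := summable_sq_of_memJ y hy
  have hzSum := summable_sq_of_memJ z hz
  have hxSum := summable_sq_of_memJ x hx
  have hty : ∑' k, y k ^ 2 ≤ 1 := by
    refine (tsum_sq_le_of_memJ y hy).trans ?_
    nlinarith [jamesNorm_nonneg' y hy]
  have htz : ∑' k, z k ^ 2 ≤ 1 := by
    refine (tsum_sq_le_of_memJ z hz).trans ?_
    nlinarith [jamesNorm_nonneg' z hz]
  have htx : ∑' k, x k ^ 2 = 1 := by
    have hnn : (0:ℝ) ≤ ∑' k, x k ^ 2 := tsum_nonneg fun k => sq_nonneg _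
    have := Real.sq_sqrt hnn
    rw [show Real.sqrt (∑' k, x k ^ 2) = l2Norm x from rfl, h2] at this
    linarith
  have hxk : ∀ k, x k = a * y k + b * z k := by
    intro k
    have := congrFun hxyz k
    simpa using this.symm
  have hkey : ∀ k, a * y k ^ 2 + b * z k ^ 2 - x k ^ 2 = a * b * (y k - z k) ^ 2 := by
    intro k
    have hb1 : b = 1 - a := by linarith
    rw [hxk k, hb1]; ring
  have hwSum : Summable (fun k => a * b * (y k - z k) ^ 2) := by
    have : Summable (fun k => a * y k ^ 2 + b * z k ^ 2 - x k ^ 2) :=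
      ((hySum.mul_left a).add (hzSum.mul_left b)).sub hxSum
    exact this.congr hkey
  have hwt : ∑' k, a * b * (y k - z k) ^ 2 ≤ 0 := by
    have heq : ∑' k, a * b * (y k - z k) ^ 2
        = a * (∑' k, y k ^ 2) + b * (∑' k, z k ^ 2) - ∑' k, x k ^ 2 := by
      rw [← tsum_mul_left, ← tsum_mul_left,
        ← Summable.tsum_add (hySum.mul_left a) (hzSum.mul_left b),
        ← Summable.tsum_sub ((hySum.mul_left a).add (hzSum.mul_left b)) hxSum]
      exact tsum_congr fun k => (hkey k).symm
    rw [heq, htx]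
    nlinarith
  have hyz : ∀ k, y k = z k := by
    intro k
    have hle : a * b * (y k - z k) ^ 2 ≤ ∑' k, a * b * (y k - z k) ^ 2 :=
      Summable.le_tsum hwSum k fun j _ => by positivity
    have : a * b * (y k - z k) ^ 2 = 0 := le_antisymm (hle.trans hwt) (by positivity)
    have h0 : (y k - z k) ^ 2 = 0 := by
      have hab0 : 0 < a * b := mul_pos ha hb
      exact (mul_eq_zero.mp this).resolve_left (ne_of_gt hab0)
    nlinarith [sq_nonneg (y k - z k)]
  have hyx : y = x := by
    funext k
    rw [hxk k, ← hyz k]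
    linear_combination (y k) * hab.symm
  exact hyx
end

section
/- A vector x ∈ J is an extreme point of the closed unit ball B_J if and only if ‖x‖_J = ‖x‖₂ = 1. -/
open Filter Topology Classical

noncomputable section
namespace JamesAux

/-- partial sums -/
def ps (x : ℕ → ℝ) (n : ℕ) : ℝ := ∑ k ∈ Finset.range n, x k

lemma ps_succ (x : ℕ → ℝ) (n : ℕ) : ps x (n+1) = ps x n + x n := Finset.sum_range_succ _ _

lemma sum_Icc_eq (x : ℕ → ℝ) {a b : ℕ} (h : a ≤ b) :
    ∑ k ∈ Finset.Icc a b, x k = ps x (b+1) - ps x a := by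
  rw [← Finset.Ico_add_one_right_eq_Icc, Finset.sum_Ico_eq_sub _ (by omega)]; rfl

/-- the square of an estimate -/
def estSq (x : ℕ → ℝ) (n : ℕ) (f : Fin n → ℕ × ℕ) : ℝ :=
  ∑ i, (∑ k ∈ Finset.Icc (f i).1 (f i).2, x k) ^ 2

lemma estSq_nonneg (x : ℕ → ℝ) (n : ℕ) (f : Fin n → ℕ × ℕ) : 0 ≤ estSq x n f :=
  Finset.sum_nonneg fun _ _ => sq_nonneg _

lemma sqrt_estSq_mem (x : ℕ → ℝ) {n : ℕ} {f : Fin n → ℕ × ℕ} (h : Admissible n f) :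
    Real.sqrt (estSq x n f) ∈ estimates x := ⟨n, f, h, rfl⟩

lemma zero_mem_estimates (x : ℕ → ℝ) : (0:ℝ) ∈ estimates x := by
  refine ⟨0, fun i => i.elim0, ⟨fun i => i.elim0, fun i => i.elim0⟩, by simp⟩

lemma estimates_nonempty (x : ℕ → ℝ) : (estimates x).Nonempty := ⟨0, zero_mem_estimates x⟩

lemma jamesNorm_nonneg {x : ℕ → ℝ} (hx : MemJ x) : 0 ≤ jamesNorm x :=
  le_csSup hx (zero_mem_estimates x)

lemma est_le_jamesNorm {x : ℕ → ℝ} (hx : MemJ x) {r : ℝ} (h : r ∈ estimates x) :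
    r ≤ jamesNorm x := le_csSup hx h

lemma estSq_le {x : ℕ → ℝ} (hx : MemJ x) {n : ℕ} {f : Fin n → ℕ × ℕ} (h : Admissible n f) :
    estSq x n f ≤ jamesNorm x ^ 2 := by
  have h1 : Real.sqrt (estSq x n f) ≤ jamesNorm x := est_le_jamesNorm hx (sqrt_estSq_mem x h)
  calc estSq x n f = Real.sqrt (estSq x n f) ^ 2 := (Real.sq_sqrt (estSq_nonneg x n f)).symm
    _ ≤ jamesNorm x ^ 2 := by
        have := Real.sqrt_nonneg (estSq x n f)
        nlinarith

lemma abs_intSum_le {x : ℕ → ℝ} (hx : MemJ x) (a b : ℕ) :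
    |∑ k ∈ Finset.Icc a b, x k| ≤ jamesNorm x := by
  by_cases h : a ≤ b
  · have hadm : Admissible 1 (fun _ => (a, b)) :=
      ⟨fun _ => h, fun i j hij => absurd hij (by omega)⟩
    have := est_le_jamesNorm hx (sqrt_estSq_mem x hadm)
    rwa [estSq, Fin.sum_univ_one, Real.sqrt_sq_eq_abs] at this
  · rw [Finset.Icc_eq_empty (by omega)]
    simpa using jamesNorm_nonneg hx

lemma sum_sq_range_le {x : ℕ → ℝ} (hx : MemJ x) (N : ℕ) :
    ∑ k ∈ Finset.range N, x k ^ 2 ≤ jamesNorm x ^ 2 := by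
  have hadm : Admissible N (fun i => ((i : ℕ), (i : ℕ))) :=
    ⟨fun i => le_refl _, fun i j hij => hij⟩
  have h := estSq_le hx hadm
  rw [estSq] at h
  simp only [Finset.Icc_self, Finset.sum_singleton] at h
  rwa [Fin.sum_univ_eq_sum_range (fun k => x k ^ 2) N] at h

lemma summable_sq {x : ℕ → ℝ} (hx : MemJ x) : Summable (fun k => x k ^ 2) :=
  summable_of_sum_range_le (fun _ => sq_nonneg _) (sum_sq_range_le hx)

lemma tsum_sq_le {x : ℕ → ℝ} (hx : MemJ x) : ∑' k, x k ^ 2 ≤ jamesNorm x ^ 2 :=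
  Summable.tsum_le_of_sum_range_le (summable_sq hx) (sum_sq_range_le hx)




/-- chain value -/
def cval (x : ℕ → ℝ) (m : ℕ) (g : ℕ → ℕ) : ℝ :=
  ∑ i ∈ Finset.range m, (ps x (g (i+1)) - ps x (g i)) ^ 2

lemma cval_nonneg (x : ℕ → ℝ) (m : ℕ) (g : ℕ → ℕ) : 0 ≤ cval x m g :=
  Finset.sum_nonneg fun _ _ => sq_nonneg _

lemma cval_zero (x : ℕ → ℝ) (g : ℕ → ℕ) : cval x 0 g = 0 := by simp [cval]

lemma cval_succ (x : ℕ → ℝ) (m : ℕ) (g : ℕ → ℕ) :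
    cval x (m+1) g = cval x m g + (ps x (g (m+1)) - ps x (g m)) ^ 2 :=
  Finset.sum_range_succ _ _

lemma cval_front (x : ℕ → ℝ) (m : ℕ) (g : ℕ → ℕ) :
    cval x (m+1) g = cval x m (g ∘ Nat.succ) + (ps x (g 1) - ps x (g 0)) ^ 2 :=
  Finset.sum_range_succ' _ _

def ChainsSet (x : ℕ → ℝ) : Set ℝ := {v | ∃ m g, Monotone g ∧ v = cval x m g}
def LSet (x : ℕ → ℝ) (c : ℕ) : Set ℝ := {v | ∃ m g, Monotone g ∧ g m ≤ c ∧ v = cval x m g}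
def RSet (x : ℕ → ℝ) (c : ℕ) : Set ℝ := {v | ∃ m g, Monotone g ∧ c ≤ g 0 ∧ v = cval x m g}
def Lv (x : ℕ → ℝ) (c : ℕ) : ℝ := sSup (LSet x c)
def Rv (x : ℕ → ℝ) (c : ℕ) : ℝ := sSup (RSet x c)

lemma zero_mem_LSet (x : ℕ → ℝ) (c : ℕ) : (0:ℝ) ∈ LSet x c :=
  ⟨0, fun _ => c, monotone_const, le_refl _, (cval_zero x _).symm⟩
lemma zero_mem_RSet (x : ℕ → ℝ) (c : ℕ) : (0:ℝ) ∈ RSet x c :=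
  ⟨0, fun _ => c, monotone_const, le_refl _, (cval_zero x _).symm⟩
lemma zero_mem_ChainsSet (x : ℕ → ℝ) : (0:ℝ) ∈ ChainsSet x :=
  ⟨0, fun _ => 0, monotone_const, (cval_zero x _).symm⟩
lemma LSet_subset (x : ℕ → ℝ) (c : ℕ) : LSet x c ⊆ ChainsSet x :=
  fun v ⟨m, g, hm, _, hv⟩ => ⟨m, g, hm, hv⟩
lemma RSet_subset (x : ℕ → ℝ) (c : ℕ) : RSet x c ⊆ ChainsSet x :=
  fun v ⟨m, g, hm, _, hv⟩ => ⟨m, g, hm, hv⟩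

/-- concatenation of chains -/
def cat (m₁ : ℕ) (g₁ g₂ : ℕ → ℕ) : ℕ → ℕ := fun i => if i ≤ m₁ then g₁ i else g₂ (i - (m₁+1))

lemma cat_mono {m₁ : ℕ} {g₁ g₂ : ℕ → ℕ} (h₁ : Monotone g₁) (h₂ : Monotone g₂)
    (h : g₁ m₁ ≤ g₂ 0) : Monotone (cat m₁ g₁ g₂) := by
  apply monotone_nat_of_le_succ
  intro i
  rcases lt_trichotomy i m₁ with hi | hi | hi
  · simp only [cat, if_pos hi.le, if_pos (by omega : i + 1 ≤ m₁)]
    exact h₁ (by omega)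
  · subst hi
    simp only [cat, if_pos (le_refl i), if_neg (by omega : ¬ i + 1 ≤ i)]
    have : i + 1 - (i + 1) = 0 := by omega
    rw [this]; exact h
  · simp only [cat, if_neg (by omega : ¬ i ≤ m₁), if_neg (by omega : ¬ i + 1 ≤ m₁)]
    exact h₂ (by omega)

lemma cat_apply_le {m₁ : ℕ} (g₁ g₂ : ℕ → ℕ) {i : ℕ} (h : i ≤ m₁) : cat m₁ g₁ g₂ i = g₁ i :=
  if_pos h

lemma cat_zero (m₁ : ℕ) (g₁ g₂ : ℕ → ℕ) : cat m₁ g₁ g₂ 0 = g₁ 0 := if_pos (Nat.zero_le _)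

lemma cat_last (m₁ m₂ : ℕ) (g₁ g₂ : ℕ → ℕ) : cat m₁ g₁ g₂ (m₁+1+m₂) = g₂ m₂ := by
  simp only [cat, if_neg (by omega : ¬ m₁+1+m₂ ≤ m₁)]
  congr 1; omega

lemma cat_cval (x : ℕ → ℝ) (m₁ : ℕ) (g₁ g₂ : ℕ → ℕ) (m₂ : ℕ) :
    cval x (m₁+1+m₂) (cat m₁ g₁ g₂) =
      cval x m₁ g₁ + (ps x (g₂ 0) - ps x (g₁ m₁)) ^ 2 + cval x m₂ g₂ := by
  induction m₂ with
  | zero =>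
    rw [cval_zero, cval_succ]
    have h1 : cval x m₁ (cat m₁ g₁ g₂) = cval x m₁ g₁ := by
      apply Finset.sum_congr rfl
      intro i hi
      rw [Finset.mem_range] at hi
      rw [cat_apply_le _ _ (by omega : i + 1 ≤ m₁), cat_apply_le _ _ (by omega : i ≤ m₁)]
    have h2 : cat m₁ g₁ g₂ (m₁+1) = g₂ 0 := by
      simp only [cat, if_neg (by omega : ¬ m₁+1 ≤ m₁)]
      congr 1; omega
    rw [h1, h2, cat_apply_le _ _ (le_refl m₁)]
    ring
  | succ k ih =>
    have he : m₁+1+(k+1) = (m₁+1+k)+1 := by omega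
    rw [he, cval_succ, ih, cval_succ]
    have h1 : cat m₁ g₁ g₂ (m₁+1+k+1) = g₂ (k+1) := by
      have : m₁+1+k+1 = m₁+1+(k+1) := by omega
      rw [this, cat_last]
    have h2 : cat m₁ g₁ g₂ (m₁+1+k) = g₂ k := cat_last _ _ _ _
    rw [h1, h2]
    ring



/-- chain to family -/
lemma chain_to_family (x : ℕ → ℝ) : ∀ (m : ℕ) (g : ℕ → ℕ), Monotone g →
    ∃ n f, Admissible n f ∧ (∀ i : Fin n, (f i).2 < g m) ∧ estSq x n f = cval x m g := by
  intro m
  induction m with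
  | zero =>
    intro g _
    exact ⟨0, fun i => i.elim0, ⟨fun i => i.elim0, fun i => i.elim0⟩,
      fun i => i.elim0, by simp [estSq, cval_zero]⟩
  | succ m ih =>
    intro g hg
    obtain ⟨n, f, hadm, hb, he⟩ := ih g hg
    by_cases hlt : g m < g (m+1)
    · refine ⟨n+1, Fin.snoc f (g m, g (m+1) - 1), ⟨?_, ?_⟩, ?_, ?_⟩
      · intro i
        rcases eq_or_ne i (Fin.last n) with rfl | hi
        · simp only [Fin.snoc_last]; omega
        · obtain ⟨j, rfl⟩ : ∃ j : Fin n, i = Fin.castSucc j :=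
            ⟨i.castPred hi, (Fin.castSucc_castPred i hi).symm⟩
          simp only [Fin.snoc_castSucc]
          exact hadm.1 j
      · intro i j hij
        rcases eq_or_ne j (Fin.last n) with rfl | hj
        · have hi : i ≠ Fin.last n := Fin.ne_last_of_lt hij
          obtain ⟨i', rfl⟩ : ∃ j : Fin n, i = Fin.castSucc j :=
            ⟨i.castPred hi, (Fin.castSucc_castPred i hi).symm⟩
          simp only [Fin.snoc_castSucc, Fin.snoc_last]
          exact hb i'
        · obtain ⟨j', rfl⟩ : ∃ k : Fin n, j = Fin.castSucc k :=
            ⟨j.castPred hj, (Fin.castSucc_castPred j hj).symm⟩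
          have hi : i ≠ Fin.last n := Fin.ne_last_of_lt (hij.trans (Fin.castSucc_lt_last j'))
          obtain ⟨i', rfl⟩ : ∃ k : Fin n, i = Fin.castSucc k :=
            ⟨i.castPred hi, (Fin.castSucc_castPred i hi).symm⟩
          simp only [Fin.snoc_castSucc]
          exact hadm.2 i' j' (by exact_mod_cast hij)
      · intro i
        rcases eq_or_ne i (Fin.last n) with rfl | hi
        · simp only [Fin.snoc_last]; omega
        · obtain ⟨j, rfl⟩ : ∃ j : Fin n, i = Fin.castSucc j :=
            ⟨i.castPred hi, (Fin.castSucc_castPred i hi).symm⟩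
          simp only [Fin.snoc_castSucc]
          exact lt_trans (hb j) hlt
      · rw [estSq, Fin.sum_univ_castSucc]
        simp only [Fin.snoc_castSucc, Fin.snoc_last]
        rw [cval_succ, ← he, estSq]
        congr 1
        rw [sum_Icc_eq x (by omega : g m ≤ g (m+1) - 1)]
        have : g (m+1) - 1 + 1 = g (m+1) := by omega
        rw [this]
    · have heq : g (m+1) = g m := le_antisymm (by omega) (hg (by omega))
      refine ⟨n, f, hadm, fun i => by rw [heq]; exact hb i, ?_⟩
      rw [cval_succ, heq, ← he]
      simp


/-- family to chain -/
lemma family_to_chain (x : ℕ → ℝ) : ∀ (n : ℕ) (f : Fin (n+1) → ℕ × ℕ), Admissible (n+1) f →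
    ∃ m g, Monotone g ∧ g 0 = (f 0).1 ∧ g m = (f (Fin.last n)).2 + 1 ∧
      estSq x (n+1) f ≤ cval x m g := by
  intro n
  induction n with
  | zero =>
    intro f hadm
    refine ⟨1, fun i => if i = 0 then (f 0).1 else (f 0).2 + 1, ?_, by simp, by simp, ?_⟩
    · apply monotone_nat_of_le_succ
      intro i
      rcases Nat.eq_zero_or_pos i with rfl | hi
      · have := hadm.1 0
        norm_num
        omega
      · rw [if_neg (by omega : ¬ i = 0), if_neg (by omega : ¬ i+1 = 0)]
    · rw [estSq, Fin.sum_univ_one, cval]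
      rw [Finset.sum_range_one]
      norm_num
      rw [sum_Icc_eq x (hadm.1 0)]
  | succ n ih =>
    intro f hadm
    set f' : Fin (n+1) → ℕ × ℕ := f ∘ Fin.castSucc with hf'
    have hadm' : Admissible (n+1) f' :=
      ⟨fun i => hadm.1 _, fun i j hij => hadm.2 _ _ (by exact_mod_cast hij)⟩
    obtain ⟨m, g, hg, hg0, hgm, hle⟩ := ih f' hadm'
    set A := (f (Fin.last (n+1))).1 with hA
    set B := (f (Fin.last (n+1))).2 with hB
    have hAB : A ≤ B := hadm.1 _
    set k : ℕ → ℕ := fun i => if i = 0 then A else B + 1 with hk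
    have hkmono : Monotone k := by
      apply monotone_nat_of_le_succ
      intro i
      rcases Nat.eq_zero_or_pos i with rfl | hi
      · simp only [hk, if_pos rfl, if_neg (by omega : ¬ (0:ℕ)+1 = 0)]; omega
      · simp only [hk, if_neg (by omega : ¬ i = 0), if_neg (by omega : ¬ i+1 = 0)]; omega
    have hbd : g m ≤ k 0 := by
      have h1 : (f' (Fin.last n)).2 < A := by
        have := hadm.2 (Fin.castSucc (Fin.last n)) (Fin.last (n+1)) (Fin.castSucc_lt_last _)
        exact this
      simp only [hk, if_pos rfl]
      omega
    refine ⟨m+1+1, cat m g k, cat_mono hg hkmono hbd, ?_, ?_, ?_⟩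
    · rw [cat_zero, hg0]
      simp [hf']
    · rw [cat_last]
      simp [hk]
    · rw [cat_cval]
      have hck : cval x 1 k = (∑ kk ∈ Finset.Icc A B, x kk) ^ 2 := by
        rw [cval, Finset.sum_range_one]
        simp only [hk, if_pos rfl, if_neg (by omega : ¬ (0:ℕ)+1 = 0)]
        rw [sum_Icc_eq x hAB]
      have hsum : estSq x (n+1+1) f = estSq x (n+1) f' + (∑ kk ∈ Finset.Icc A B, x kk) ^ 2 := by
        rw [estSq, Fin.sum_univ_castSucc, estSq]
        rfl
      rw [hsum, hck]
      have : (0:ℝ) ≤ (ps x (k 0) - ps x (g m)) ^ 2 := sq_nonneg _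
      linarith



lemma cval_le_sq {x : ℕ → ℝ} (hx : MemJ x) {m : ℕ} {g : ℕ → ℕ} (hg : Monotone g) :
    cval x m g ≤ jamesNorm x ^ 2 := by
  obtain ⟨n, f, hadm, _, he⟩ := chain_to_family x m g hg
  rw [← he]
  exact estSq_le hx hadm

lemma bddAbove_ChainsSet {x : ℕ → ℝ} (hx : MemJ x) : BddAbove (ChainsSet x) := by
  refine ⟨jamesNorm x ^ 2, fun v hv => ?_⟩
  obtain ⟨m, g, hg, rfl⟩ := hv
  exact cval_le_sq hx hg

lemma bddAbove_LSet {x : ℕ → ℝ} (hx : MemJ x) (c : ℕ) : BddAbove (LSet x c) :=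
  (bddAbove_ChainsSet hx).mono (LSet_subset x c)

lemma bddAbove_RSet {x : ℕ → ℝ} (hx : MemJ x) (c : ℕ) : BddAbove (RSet x c) :=
  (bddAbove_ChainsSet hx).mono (RSet_subset x c)

lemma sSup_ChainsSet_eq {x : ℕ → ℝ} (hx : MemJ x) : sSup (ChainsSet x) = jamesNorm x ^ 2 := by
  apply le_antisymm
  · apply csSup_le ⟨0, zero_mem_ChainsSet x⟩
    rintro v ⟨m, g, hg, rfl⟩
    exact cval_le_sq hx hg
  · have hC0 : 0 ≤ sSup (ChainsSet x) := le_csSup (bddAbove_ChainsSet hx) (zero_mem_ChainsSet x)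
    have hjn : jamesNorm x ≤ Real.sqrt (sSup (ChainsSet x)) := by
      apply csSup_le (estimates_nonempty x)
      rintro r ⟨n, f, hadm, rfl⟩
      rcases Nat.eq_zero_or_pos n with rfl | hn
      · simp only [Finset.univ_eq_empty, Finset.sum_empty]
        rw [Real.sqrt_zero]
        exact Real.sqrt_nonneg _
      · obtain ⟨n', rfl⟩ : ∃ n', n = n' + 1 := ⟨n - 1, by omega⟩
        obtain ⟨m, g, hg, _, _, hle⟩ := family_to_chain x n' f hadm
        have h2 : cval x m g ≤ sSup (ChainsSet x) :=
          le_csSup (bddAbove_ChainsSet hx) ⟨m, g, hg, rfl⟩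
        exact Real.sqrt_le_sqrt (by exact le_trans hle h2)
    have h3 : jamesNorm x ^ 2 ≤ Real.sqrt (sSup (ChainsSet x)) ^ 2 := by
      have := jamesNorm_nonneg hx
      nlinarith [Real.sqrt_nonneg (sSup (ChainsSet x))]
    rwa [Real.sq_sqrt hC0] at h3

lemma Lv_nonneg {x : ℕ → ℝ} (hx : MemJ x) (c : ℕ) : 0 ≤ Lv x c :=
  le_csSup (bddAbove_LSet hx c) (zero_mem_LSet x c)

lemma Rv_nonneg {x : ℕ → ℝ} (hx : MemJ x) (c : ℕ) : 0 ≤ Rv x c :=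
  le_csSup (bddAbove_RSet hx c) (zero_mem_RSet x c)

lemma le_Lv {x : ℕ → ℝ} (hx : MemJ x) {c : ℕ} {v : ℝ} (h : v ∈ LSet x c) : v ≤ Lv x c :=
  le_csSup (bddAbove_LSet hx c) h

lemma le_Rv {x : ℕ → ℝ} (hx : MemJ x) {c : ℕ} {v : ℝ} (h : v ∈ RSet x c) : v ≤ Rv x c :=
  le_csSup (bddAbove_RSet hx c) h

lemma Lv_zero (x : ℕ → ℝ) : Lv x 0 = 0 := by
  have hb : ∀ v ∈ LSet x 0, v ≤ 0 := by
    rintro v ⟨m, g, hg, hgm, rfl⟩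
    have hz : ∀ i ≤ m, g i = 0 := fun i hi => Nat.le_zero.mp (le_trans (hg hi) hgm)
    apply le_of_eq
    apply Finset.sum_eq_zero
    intro i hi
    rw [Finset.mem_range] at hi
    rw [hz i (by omega), hz (i+1) (by omega)]
    ring
  exact le_antisymm (csSup_le ⟨0, zero_mem_LSet x 0⟩ hb)
    (le_csSup ⟨0, fun v hv => hb v hv⟩ (zero_mem_LSet x 0))

lemma Rv_zero (x : ℕ → ℝ) : Rv x 0 = sSup (ChainsSet x) := by
  have : RSet x 0 = ChainsSet x := by
    ext v
    constructor
    · rintro ⟨m, g, hg, _, rfl⟩; exact ⟨m, g, hg, rfl⟩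
    · rintro ⟨m, g, hg, rfl⟩; exact ⟨m, g, hg, Nat.zero_le _, rfl⟩
  rw [Rv, this]

lemma Lv_add_Rv_le {x : ℕ → ℝ} (hx : MemJ x) (c : ℕ) :
    Lv x c + Rv x c ≤ sSup (ChainsSet x) := by
  have key : ∀ v ∈ LSet x c, ∀ w ∈ RSet x c, v + w ≤ sSup (ChainsSet x) := by
    rintro v ⟨m₁, g₁, hg₁, hgm₁, rfl⟩ w ⟨m₂, g₂, hg₂, hg₂0, rfl⟩
    have hbd : g₁ m₁ ≤ g₂ 0 := le_trans hgm₁ hg₂0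
    have hmem : cval x (m₁+1+m₂) (cat m₁ g₁ g₂) ∈ ChainsSet x :=
      ⟨_, _, cat_mono hg₁ hg₂ hbd, rfl⟩
    have := le_csSup (bddAbove_ChainsSet hx) hmem
    rw [cat_cval] at this
    nlinarith [sq_nonneg (ps x (g₂ 0) - ps x (g₁ m₁))]
  have h1 : Lv x c ≤ sSup (ChainsSet x) - Rv x c := by
    apply csSup_le ⟨0, zero_mem_LSet x c⟩
    intro v hv
    have h2 : Rv x c ≤ sSup (ChainsSet x) - v := by
      apply csSup_le ⟨0, zero_mem_RSet x c⟩
      intro w hw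
      linarith [key v hv w hw]
    linarith
  linarith

/-- two point chain -/
def tpc (a b : ℕ) : ℕ → ℕ := fun i => if i = 0 then a else b

lemma tpc_mono {a b : ℕ} (h : a ≤ b) : Monotone (tpc a b) := by
  apply monotone_nat_of_le_succ
  intro i
  by_cases hi : i = 0
  · subst hi; norm_num [tpc]; omega
  · rw [show tpc a b i = b from if_neg hi, show tpc a b (i+1) = b from if_neg (by omega)]

lemma tpc_cval (x : ℕ → ℝ) (a b : ℕ) : cval x 1 (tpc a b) = (ps x b - ps x a) ^ 2 := by
  rw [cval, Finset.sum_range_one]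
  simp [tpc]

lemma Lv_superadd {x : ℕ → ℝ} (hx : MemJ x) (c : ℕ) :
    Lv x c + x c ^ 2 ≤ Lv x (c+1) := by
  have key : ∀ v ∈ LSet x c, v + x c ^ 2 ≤ Lv x (c+1) := by
    rintro v ⟨m, g, hg, hgm, rfl⟩
    have hmem : cval x (m+1+1) (cat m g (tpc c (c+1))) ∈ LSet x (c+1) := by
      refine ⟨_, _, cat_mono hg (tpc_mono (by omega)) (by simpa [tpc] using hgm), ?_, rfl⟩
      rw [cat_last]
      simp [tpc]
    have := le_Lv hx hmem
    rw [cat_cval, tpc_cval] at this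
    have hps : ps x (c+1) - ps x c = x c := by rw [ps_succ]; ring
    rw [hps] at this
    have h0 : tpc c (c+1) 0 = c := rfl
    rw [h0] at this
    nlinarith [sq_nonneg (ps x c - ps x (g m))]
  have h2 : Lv x c ≤ Lv x (c+1) - x c ^ 2 := csSup_le ⟨0, zero_mem_LSet x c⟩
    (fun v hv => by linarith [key v hv])
  linarith

lemma Rv_superadd {x : ℕ → ℝ} (hx : MemJ x) (c : ℕ) :
    x c ^ 2 + Rv x (c+1) ≤ Rv x c := by
  have key : ∀ w ∈ RSet x (c+1), x c ^ 2 + w ≤ Rv x c := by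
    rintro w ⟨m, g, hg, hg0, rfl⟩
    have hbd : tpc c (c+1) 1 ≤ g 0 := by simpa [tpc] using hg0
    have hmem : cval x (1+1+m) (cat 1 (tpc c (c+1)) g) ∈ RSet x c := by
      refine ⟨_, _, cat_mono (tpc_mono (by omega)) hg hbd, ?_, rfl⟩
      rw [cat_zero]
      simp [tpc]
    have := le_Rv hx hmem
    rw [cat_cval, tpc_cval] at this
    have hps : ps x (c+1) - ps x c = x c := by rw [ps_succ]; ring
    rw [hps] at this
    have h1 : tpc c (c+1) 1 = c + 1 := rfl
    rw [h1] at this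
    nlinarith [sq_nonneg (ps x (g 0) - ps x (c+1))]
  have h2 : Rv x (c+1) ≤ Rv x c - x c ^ 2 := csSup_le ⟨0, zero_mem_RSet x (c+1)⟩
    (fun w hw => by linarith [key w hw])
  linarith

lemma normalize_last (x : ℕ → ℝ) : ∀ (m : ℕ) (g : ℕ → ℕ), Monotone g →
    ∃ m' g', Monotone g' ∧ cval x m' g' = cval x m g ∧ g' m' ≤ g m ∧
      (m' = 0 ∨ g' (m'-1) < g' m') := by
  intro m
  induction m with
  | zero => exact fun g hg => ⟨0, g, hg, rfl, le_refl _, Or.inl rfl⟩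
  | succ m ih =>
    intro g hg
    by_cases h : g m < g (m+1)
    · exact ⟨m+1, g, hg, rfl, le_refl _, Or.inr (by simpa using h)⟩
    · have heq : g (m+1) = g m := le_antisymm (by omega) (hg (by omega))
      obtain ⟨m', g', hm', he, hle, hd⟩ := ih g hg
      refine ⟨m', g', hm', ?_, by omega, hd⟩
      rw [he, cval_succ, heq]
      simp

lemma normalize_front (x : ℕ → ℝ) : ∀ (m : ℕ) (g : ℕ → ℕ), Monotone g →
    ∃ m' g', Monotone g' ∧ cval x m' g' = cval x m g ∧ g 0 ≤ g' 0 ∧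
      (m' = 0 ∨ g' 0 < g' 1) := by
  intro m
  induction m with
  | zero => exact fun g hg => ⟨0, g, hg, rfl, le_refl _, Or.inl rfl⟩
  | succ m ih =>
    intro g hg
    by_cases h : g 0 < g 1
    · exact ⟨m+1, g, hg, rfl, le_refl _, Or.inr h⟩
    · have heq : g 1 = g 0 := le_antisymm (by omega) (hg (by omega))
      obtain ⟨m', g', hm', he, hle, hd⟩ := ih (g ∘ Nat.succ) (hg.comp (fun a b hab => by omega))
      refine ⟨m', g', hm', ?_, ?_, hd⟩
      · rw [he, cval_front, heq]
        simp
      · have : g 1 ≤ g' 0 := by simpa using hle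
        omega


lemma finalArith (Ln Lnp Rn Rnp CC dd A B u Δ w : ℝ)
    (hd0 : 0 < dd)
    (hED : Lnp = Ln + Δ^2 + dd)
    (hc1 : Ln + Rn = CC) (hc2 : Lnp + Rnp = CC)
    (hF1 : A + u^2 ≤ Ln)
    (hF2 : Lnp - dd/2 < A + (u+Δ)^2)
    (hF3 : B + w^2 ≤ Rnp)
    (hF4 : Rn - dd/2 < B + (Δ+w)^2)
    (hF5 : A + (u+Δ+w)^2 + B ≤ CC) : False := by
  have h3 : dd/2 < 2*u*Δ := by nlinarith
  have h4 : dd/2 < 2*Δ*w := by nlinarith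
  have huw : u*w < 0 := by nlinarith
  have hprod : 0 < (2*u*Δ)*(2*Δ*w) := mul_pos (by linarith) (by linarith)
  nlinarith [mul_nonpos_of_nonneg_of_nonpos (by positivity : (0:ℝ) ≤ 4*Δ^2) huw.le]

set_option maxHeartbeats 1000000 in
lemma claimB {x : ℕ → ℝ} (hx : MemJ x)
    (hcut : ∀ c, Lv x c + Rv x c = sSup (ChainsSet x)) (n : ℕ) :
    Lv x (n+1) ≤ Lv x n + x n ^ 2 := by
  by_contra hcon
  push_neg at hcon
  set C := sSup (ChainsSet x) with hC
  set d := Lv x (n+1) - Lv x n - x n ^ 2 with hdd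
  have hd0 : 0 < d := by simp only [hdd]; linarith
  have hED : Lv x (n+1) = Lv x n + x n ^ 2 + d := by simp only [hdd]; ring
  have hc1 : Lv x n + Rv x n = C := hcut n
  have hc2 : Lv x (n+1) + Rv x (n+1) = C := hcut (n+1)
  have hLn0 : 0 ≤ Lv x n := Lv_nonneg hx n
  have hRn10 : 0 ≤ Rv x (n+1) := Rv_nonneg hx (n+1)
  -- L-side near-optimal chain
  obtain ⟨v, hvmem, hv⟩ := exists_lt_of_lt_csSup ⟨0, zero_mem_LSet x (n+1)⟩
    (show Lv x (n+1) - d/2 < sSup (LSet x (n+1)) by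
      have : Lv x (n+1) - d/2 < Lv x (n+1) := by linarith
      exact this)
  obtain ⟨m0, g0, hg0, hg0m, rfl⟩ := hvmem
  obtain ⟨m1, g1, hg1, he1, hle1, hdich⟩ := normalize_last x m0 g0 hg0
  have hvv : Lv x (n+1) - d/2 < cval x m1 g1 := by rw [he1]; exact hv
  have hg1m : g1 m1 ≤ n+1 := le_trans hle1 hg0m
  have hm1 : m1 ≠ 0 := by
    intro h
    rw [h, cval_zero] at hvv
    nlinarith [sq_nonneg (x n)]
  obtain ⟨mp, rfl⟩ : ∃ mp, m1 = mp + 1 := ⟨m1 - 1, by omega⟩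
  have hstep : g1 mp < g1 (mp+1) := by
    rcases hdich with h | h
    · omega
    · simpa using h
  have hend : g1 (mp+1) = n+1 := by
    by_contra h
    have h2 : g1 (mp+1) ≤ n := by omega
    have hmem : cval x (mp+1) g1 ∈ LSet x n := ⟨mp+1, g1, hg1, h2, rfl⟩
    have := le_Lv hx hmem
    nlinarith [sq_nonneg (x n)]
  have han : g1 mp ≤ n := by omega
  have hvA : cval x (mp+1) g1 = cval x mp g1 + (ps x (n+1) - ps x (g1 mp)) ^ 2 := by
    rw [cval_succ, hend]
  have hann : g1 mp ≠ n := by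
    intro h
    have hmem : cval x mp g1 ∈ LSet x n := ⟨mp, g1, hg1, le_of_eq h, rfl⟩
    have hA := le_Lv hx hmem
    rw [hvA, h] at hvv
    rw [ps_succ] at hvv
    nlinarith
  have han' : g1 mp < n := by omega
  have hF1 : cval x mp g1 + (ps x n - ps x (g1 mp)) ^ 2 ≤ Lv x n := by
    have hmono := cat_mono hg1 (monotone_const : Monotone (fun _ : ℕ => n)) han
    have hmem : cval x (mp+1+0) (cat mp g1 (fun _ => n)) ∈ LSet x n := by
      refine ⟨_, _, hmono, ?_, rfl⟩
      rw [cat_last]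
    have := le_Lv hx hmem
    rw [cat_cval, cval_zero] at this
    linarith
  have hF2 : Lv x (n+1) - d/2 < cval x mp g1 + (ps x (n+1) - ps x (g1 mp)) ^ 2 := by
    rw [← hvA]; exact hvv
  -- R-side near-optimal chain
  obtain ⟨w, hwmem, hw⟩ := exists_lt_of_lt_csSup ⟨0, zero_mem_RSet x n⟩
    (show Rv x n - d/2 < sSup (RSet x n) by
      have : Rv x n - d/2 < Rv x n := by linarith
      exact this)
  obtain ⟨k0, h0, hh0, hh0n, rfl⟩ := hwmem
  obtain ⟨k1, h1, hh1, he2, hle2, hdich2⟩ := normalize_front x k0 h0 hh0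
  have hww : Rv x n - d/2 < cval x k1 h1 := by rw [he2]; exact hw
  have hh1n : n ≤ h1 0 := le_trans hh0n hle2
  have hRd : Rv x n = Rv x (n+1) + x n ^ 2 + d := by linarith
  have hk1 : k1 ≠ 0 := by
    intro h
    rw [h, cval_zero] at hww
    nlinarith [sq_nonneg (x n)]
  have hfront : h1 0 = n := by
    by_contra h
    have h2 : n+1 ≤ h1 0 := by omega
    have hmem : cval x k1 h1 ∈ RSet x (n+1) := ⟨k1, h1, hh1, h2, rfl⟩
    have := le_Rv hx hmem
    nlinarith [sq_nonneg (x n)]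
  obtain ⟨kp, rfl⟩ : ∃ kp, k1 = kp + 1 := ⟨k1 - 1, by omega⟩
  have hstep2 : h1 0 < h1 1 := by
    rcases hdich2 with h | h
    · omega
    · exact h
  have hsuccmono : Monotone (h1 ∘ Nat.succ) := hh1.comp (fun a b hab => by omega)
  have hwB : cval x (kp+1) h1 = cval x kp (h1 ∘ Nat.succ) + (ps x (h1 1) - ps x n) ^ 2 := by
    rw [cval_front, hfront]
  have hqq : h1 1 ≠ n+1 := by
    intro h
    have hmem : cval x kp (h1 ∘ Nat.succ) ∈ RSet x (n+1) := by
      refine ⟨kp, h1 ∘ Nat.succ, hsuccmono, ?_, rfl⟩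
      show n + 1 ≤ h1 1
      omega
    have := le_Rv hx hmem
    rw [hwB, h, ps_succ] at hww
    nlinarith
  have hq2 : n+1 < h1 1 := by omega
  have hF3 : cval x kp (h1 ∘ Nat.succ) + (ps x (h1 1) - ps x (n+1)) ^ 2 ≤ Rv x (n+1) := by
    have hbd : (fun _ : ℕ => n+1) 0 ≤ (h1 ∘ Nat.succ) 0 := by
      show n + 1 ≤ h1 1
      omega
    have hmono := cat_mono (m₁ := 0) (monotone_const : Monotone (fun _ : ℕ => n+1)) hsuccmono hbd
    have hmem : cval x (0+1+kp) (cat 0 (fun _ => n+1) (h1 ∘ Nat.succ)) ∈ RSet x (n+1) := by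
      refine ⟨_, _, hmono, ?_, rfl⟩
      rw [cat_zero]
    have h9 := le_Rv hx hmem
    rw [cat_cval, cval_zero] at h9
    have h10 : 0 + (ps x (h1 1) - ps x (n+1)) ^ 2 + cval x kp (h1 ∘ Nat.succ) ≤ Rv x (n+1) := h9
    linarith
  have hF4 : Rv x n - d/2 < cval x kp (h1 ∘ Nat.succ) + (ps x (h1 1) - ps x n) ^ 2 := by
    rw [← hwB]; exact hww
  -- global chain
  have hF5 : cval x mp g1 + (ps x (h1 1) - ps x (g1 mp)) ^ 2 + cval x kp (h1 ∘ Nat.succ) ≤ C := by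
    have hbd : g1 mp ≤ (h1 ∘ Nat.succ) 0 := by
      show g1 mp ≤ h1 1
      omega
    have hmono := cat_mono hg1 hsuccmono hbd
    have hmem : cval x (mp+1+kp) (cat mp g1 (h1 ∘ Nat.succ)) ∈ ChainsSet x :=
      ⟨_, _, hmono, rfl⟩
    have := le_csSup (bddAbove_ChainsSet hx) hmem
    rw [cat_cval] at this
    exact this
  -- arithmetic
  have hpsQ : ps x (n+1) = ps x n + x n := ps_succ x n
  refine finalArith (Lv x n) (Lv x (n+1)) (Rv x n) (Rv x (n+1)) C d
    (cval x mp g1) (cval x kp (h1 ∘ Nat.succ))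
    (ps x n - ps x (g1 mp)) (x n) (ps x (h1 1) - ps x (n+1))
    hd0 (by rw [hED]) hc1 hc2 hF1 ?_ ?_ ?_ ?_
  · have e1 : ps x (n+1) - ps x (g1 mp) = (ps x n - ps x (g1 mp)) + x n := by
      rw [hpsQ]; ring
    rw [← e1]
    exact hF2
  · have e2 : ps x (h1 1) - ps x (n+1) = ps x (h1 1) - ps x (n+1) := rfl
    exact hF3
  · have e3 : ps x (h1 1) - ps x n = x n + (ps x (h1 1) - ps x (n+1)) := by
      rw [hpsQ]; ring
    rw [← e3]
    exact hF4
  · have e4 : ps x (h1 1) - ps x (g1 mp) =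
        (ps x n - ps x (g1 mp)) + x n + (ps x (h1 1) - ps x (n+1)) := by
      rw [hpsQ]; ring
    rw [← e4]
    exact hF5


lemma subfam (x : ℕ → ℝ) {n : ℕ} {f : Fin n → ℕ × ℕ} (hadm : Admissible n f)
    (s : Finset (Fin n)) {k : ℕ} (hk : s.card = k) :
    Admissible k (fun j => f (s.orderIsoOfFin hk j)) ∧
    estSq x k (fun j => f (s.orderIsoOfFin hk j)) =
      ∑ i ∈ s, (∑ kk ∈ Finset.Icc (f i).1 (f i).2, x kk) ^ 2 := by
  constructor
  · refine ⟨fun j => hadm.1 _, fun i j hij => hadm.2 _ _ ?_⟩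
    exact (s.orderIsoOfFin hk).lt_iff_lt.mpr hij
  · rw [estSq, ← Finset.sum_coe_sort s (fun i => (∑ kk ∈ Finset.Icc (f i).1 (f i).2, x kk) ^ 2)]
    exact Fintype.sum_equiv (s.orderIsoOfFin hk).toEquiv _ _ (fun j => rfl)

lemma family_to_chain' (x : ℕ → ℝ) {n : ℕ} {f : Fin n → ℕ × ℕ} (hadm : Admissible n f)
    {n' : ℕ} (hn : n = n' + 1) :
    ∃ m g, Monotone g ∧ g 0 = (f ⟨0, by omega⟩).1 ∧ g m = (f ⟨n', by omega⟩).2 + 1 ∧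
      estSq x n f ≤ cval x m g := by
  subst hn
  obtain ⟨m, g, hg, h0, hm, hle⟩ := family_to_chain x n' f hadm
  exact ⟨m, g, hg, h0, hm, hle⟩

lemma split_bound {x : ℕ → ℝ} (hx : MemJ x) {n : ℕ} {f : Fin n → ℕ × ℕ}
    (hadm : Admissible n f) (c : ℕ)
    (hsplit : ∀ i, (f i).2 < c ∨ c ≤ (f i).1) :
    estSq x n f ≤ Lv x c + Rv x c := by
  classical
  have hdecomp : estSq x n f =
      (∑ i ∈ Finset.univ.filter (fun i : Fin n => (f i).2 < c),
        (∑ kk ∈ Finset.Icc (f i).1 (f i).2, x kk) ^ 2) +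
      (∑ i ∈ Finset.univ.filter (fun i : Fin n => ¬ (f i).2 < c),
        (∑ kk ∈ Finset.Icc (f i).1 (f i).2, x kk) ^ 2) := by
    rw [estSq]
    exact (Finset.sum_filter_add_sum_filter_not _ _ _).symm
  have hlow : (∑ i ∈ Finset.univ.filter (fun i : Fin n => (f i).2 < c),
      (∑ kk ∈ Finset.Icc (f i).1 (f i).2, x kk) ^ 2) ≤ Lv x c := by
    set s := Finset.univ.filter (fun i : Fin n => (f i).2 < c) with hs
    rcases Nat.eq_zero_or_pos s.card with h0 | hpos
    · rw [Finset.card_eq_zero] at h0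
      rw [h0, Finset.sum_empty]
      exact Lv_nonneg hx c
    · obtain ⟨k', hk⟩ : ∃ k', s.card = k' + 1 := ⟨s.card - 1, by omega⟩
      obtain ⟨hadm', hsum⟩ := subfam x hadm s hk
      obtain ⟨m, g, hg, hg0, hgm, hle⟩ := family_to_chain' x hadm' (rfl : k' + 1 = k' + 1)
      have hmem : ((s.orderIsoOfFin hk ⟨k', by omega⟩ : Fin n)) ∈ s :=
        (s.orderIsoOfFin hk _).2
      have hmem2 : (f ((s.orderIsoOfFin hk ⟨k', by omega⟩ : Fin n))).2 < c :=
        (Finset.mem_filter.mp hmem).2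
      have hgmc : g m ≤ c := by rw [hgm]; omega
      have hLmem : cval x m g ∈ LSet x c := ⟨m, g, hg, hgmc, rfl⟩
      calc (∑ i ∈ s, (∑ kk ∈ Finset.Icc (f i).1 (f i).2, x kk) ^ 2)
          = estSq x (k'+1) (fun j => f (s.orderIsoOfFin hk j)) := hsum.symm
        _ ≤ cval x m g := hle
        _ ≤ Lv x c := le_Lv hx hLmem
  have hhigh : (∑ i ∈ Finset.univ.filter (fun i : Fin n => ¬ (f i).2 < c),
      (∑ kk ∈ Finset.Icc (f i).1 (f i).2, x kk) ^ 2) ≤ Rv x c := by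
    set s := Finset.univ.filter (fun i : Fin n => ¬ (f i).2 < c) with hs
    rcases Nat.eq_zero_or_pos s.card with h0 | hpos
    · rw [Finset.card_eq_zero] at h0
      rw [h0, Finset.sum_empty]
      exact Rv_nonneg hx c
    · obtain ⟨k', hk⟩ : ∃ k', s.card = k' + 1 := ⟨s.card - 1, by omega⟩
      obtain ⟨hadm', hsum⟩ := subfam x hadm s hk
      obtain ⟨m, g, hg, hg0, hgm, hle⟩ := family_to_chain' x hadm' (rfl : k' + 1 = k' + 1)
      have hmem : ((s.orderIsoOfFin hk ⟨0, by omega⟩ : Fin n)) ∈ s :=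
        (s.orderIsoOfFin hk _).2
      have hmem2 : ¬ (f ((s.orderIsoOfFin hk ⟨0, by omega⟩ : Fin n))).2 < c :=
        (Finset.mem_filter.mp hmem).2
      have hsp := hsplit ((s.orderIsoOfFin hk ⟨0, by omega⟩ : Fin n))
      have hg0c : c ≤ g 0 := by
        rw [hg0]
        omega
      have hRmem : cval x m g ∈ RSet x c := ⟨m, g, hg, hg0c, rfl⟩
      calc (∑ i ∈ s, (∑ kk ∈ Finset.Icc (f i).1 (f i).2, x kk) ^ 2)
          = estSq x (k'+1) (fun j => f (s.orderIsoOfFin hk j)) := hsum.symm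
        _ ≤ cval x m g := hle
        _ ≤ Rv x c := le_Rv hx hRmem
  linarith [hdecomp, hlow, hhigh]

/-- the two-point perturbation -/
def ptb (c : ℕ) (τ : ℝ) : ℕ → ℝ := fun k => if k = c then τ else if k = c+1 then -τ else 0

lemma ptb_sum (c : ℕ) (τ : ℝ) (a b : ℕ) :
    ∑ k ∈ Finset.Icc a b, ptb c τ k =
      (if a ≤ c ∧ c ≤ b then τ else 0) + (if a ≤ c+1 ∧ c+1 ≤ b then -τ else 0) := by
  have hsplit : ∀ k, ptb c τ k = (if k = c then τ else 0) + (if k = c+1 then -τ else 0) := by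
    intro k
    by_cases h1 : k = c
    · simp only [ptb, if_pos h1, if_neg (show ¬ k = c+1 by omega)]
      ring
    · by_cases h2 : k = c+1
      · simp only [ptb, if_neg h1, if_pos h2]
        ring
      · simp only [ptb, if_neg h1, if_neg h2]
        ring
  rw [Finset.sum_congr rfl (fun k _ => hsplit k), Finset.sum_add_distrib]
  congr 1
  · rw [Finset.sum_ite_eq' (Finset.Icc a b) c (fun _ => τ)]
    simp [Finset.mem_Icc]
  · rw [Finset.sum_ite_eq' (Finset.Icc a b) (c+1) (fun _ => -τ)]
    simp [Finset.mem_Icc]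

lemma neg_ptb (c : ℕ) (τ : ℝ) : ptb c (-τ) = -ptb c τ := by
  funext k
  simp only [ptb, Pi.neg_apply]
  by_cases h1 : k = c
  · simp [h1]
  · by_cases h2 : k = c+1 <;> simp [h1, h2]

set_option maxHeartbeats 1000000 in
lemma pert_est {x : ℕ → ℝ} (hx : MemJ x) (hjn : jamesNorm x ≤ 1) (c : ℕ)
    (t τ : ℝ) (ht : 0 < t) (ht1 : t ≤ 1) (hτ : |τ| ≤ t)
    (ht6 : Lv x (c+1) + Rv x (c+1) + 6*t ≤ 1) :
    ∀ r ∈ estimates (x + ptb c τ), r ≤ 1 := by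
  rintro r ⟨n, f, hadm, rfl⟩
  set SX : Fin n → ℝ := fun i => ∑ k ∈ Finset.Icc (f i).1 (f i).2, x k with hSX
  set SY : Fin n → ℝ := fun i => ∑ k ∈ Finset.Icc (f i).1 (f i).2, ptb c τ k with hSY
  have key : (∑ i, (∑ k ∈ Finset.Icc (f i).1 (f i).2, (x + ptb c τ) k)^2)
      = ∑ i, (SX i + SY i)^2 := by
    apply Finset.sum_congr rfl
    intro i _
    congr 1
    simp only [Pi.add_apply, hSX, hSY]
    exact Finset.sum_add_distrib
  have hestSq : estSq x n f = ∑ i, (SX i)^2 := rfl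
  have hSYval : ∀ i : Fin n, SY i =
      (if (f i).1 ≤ c ∧ c ≤ (f i).2 then τ else 0) +
      (if (f i).1 ≤ c+1 ∧ c+1 ≤ (f i).2 then -τ else 0) := fun i => ptb_sum c τ _ _
  have hmain : (∑ i, (SX i + SY i)^2) ≤ 1 := by
    by_cases hcase : ∀ i : Fin n, ((f i).1 ≤ c ∧ c ≤ (f i).2) ↔ ((f i).1 ≤ c+1 ∧ c+1 ≤ (f i).2)
    · -- no separation : all perturbation sums vanish
      have hzero : ∀ i : Fin n, SY i = 0 := by
        intro i
        rw [hSYval i]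
        by_cases h : (f i).1 ≤ c ∧ c ≤ (f i).2
        · rw [if_pos h, if_pos ((hcase i).mp h)]; ring
        · rw [if_neg h, if_neg (fun h2 => h ((hcase i).mpr h2))]; ring
      have : (∑ i, (SX i + SY i)^2) = estSq x n f := by
        rw [hestSq]
        apply Finset.sum_congr rfl
        intro i _
        rw [hzero i]
        ring
      rw [this]
      have h1 := estSq_le hx hadm
      have h2 := jamesNorm_nonneg hx
      nlinarith
    · push_neg at hcase
      obtain ⟨i₀, h₀⟩ := hcase
      have h₀' : ((f i₀).1 ≤ c ∧ c ≤ (f i₀).2 ∧ ¬((f i₀).1 ≤ c+1 ∧ c+1 ≤ (f i₀).2)) ∨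
          (¬((f i₀).1 ≤ c ∧ c ≤ (f i₀).2) ∧ (f i₀).1 ≤ c+1 ∧ c+1 ≤ (f i₀).2) := by
        omega
      have hnb : ∀ j, ¬((f j).1 ≤ c ∧ c+1 ≤ (f j).2) := by
        intro j hj
        rcases h₀' with ⟨hP1, hP2, hnQ⟩ | ⟨hnP, hQ1, hQ2⟩
        · have hb : (f i₀).2 ≤ c := by omega
          rcases lt_trichotomy i₀ j with hij | hij | hij
          · have := hadm.2 i₀ j hij; omega
          · subst hij; omega
          · have := hadm.2 j i₀ hij; omega
        · have ha : c + 1 ≤ (f i₀).1 := by omega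
          rcases lt_trichotomy i₀ j with hij | hij | hij
          · have := hadm.2 i₀ j hij
            have := hadm.1 i₀
            omega
          · subst hij; omega
          · have := hadm.2 j i₀ hij; omega
      have hsplit : ∀ j, (f j).2 < c+1 ∨ c+1 ≤ (f j).1 := by
        intro j
        have := hnb j
        have := hadm.1 j
        omega
      have hterm : ∀ i : Fin n, (SX i + SY i)^2 ≤
          (SX i)^2 + (if (f i).2 = c ∨ (f i).1 = c+1 then 2*t + t^2 else 0) := by
        intro i
        by_cases hflag : (f i).2 = c ∨ (f i).1 = c+1
        · rw [if_pos hflag]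
          have hySy : |SY i| ≤ t := by
            rw [hSYval i]
            by_cases h1 : (f i).1 ≤ c ∧ c ≤ (f i).2 <;>
              by_cases h2 : (f i).1 ≤ c+1 ∧ c+1 ≤ (f i).2
            · exact absurd ⟨h1.1, h2.2⟩ (hnb i)
            · rw [if_pos h1, if_neg h2, add_zero]; exact hτ
            · rw [if_neg h1, if_pos h2, zero_add, abs_neg]; exact hτ
            · rw [if_neg h1, if_neg h2, add_zero, abs_zero]; linarith
          have hxSx : |SX i| ≤ 1 := le_trans (abs_intSum_le hx _ _) hjn
          have hSy2 : (SY i)^2 ≤ t^2 := by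
            rw [← sq_abs]
            nlinarith [abs_nonneg (SY i)]
          have hcross : SX i * SY i ≤ t := by
            calc SX i * SY i ≤ |SX i * SY i| := le_abs_self _
              _ = |SX i| * |SY i| := abs_mul _ _
              _ ≤ 1 * t := mul_le_mul hxSx hySy (abs_nonneg _) (by norm_num)
              _ = t := one_mul t
          nlinarith
        · rw [if_neg hflag]
          push_neg at hflag
          have hzero : SY i = 0 := by
            rw [hSYval i]
            have h1 : ¬((f i).1 ≤ c ∧ c ≤ (f i).2) := by
              rcases hsplit i with h | h <;> omega
            have h2 : ¬((f i).1 ≤ c+1 ∧ c+1 ≤ (f i).2) := by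
              rcases hsplit i with h | h <;> omega
            rw [if_neg h1, if_neg h2]
            ring
          rw [hzero]
          ring_nf
          simp
      have hsum1 : (∑ i, (SX i + SY i)^2) ≤
          (∑ i, (SX i)^2) + ∑ i, (if (f i).2 = c ∨ (f i).1 = c+1 then 2*t + t^2 else 0) := by
        rw [← Finset.sum_add_distrib]
        exact Finset.sum_le_sum (fun i _ => hterm i)
      have hcard : (∑ i : Fin n, (if (f i).2 = c ∨ (f i).1 = c+1 then 2*t + t^2 else 0))
          ≤ 2 * (2*t + t^2) := by
        classical
        rw [Finset.sum_ite, Finset.sum_const, Finset.sum_const_zero, add_zero]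
        have hsub : (Finset.univ.filter (fun i : Fin n => (f i).2 = c ∨ (f i).1 = c+1)) =
            (Finset.univ.filter (fun i : Fin n => (f i).2 = c)) ∪
            (Finset.univ.filter (fun i : Fin n => (f i).1 = c+1)) := Finset.filter_or _ _ _
        have hc1 : (Finset.univ.filter (fun i : Fin n => (f i).2 = c)).card ≤ 1 := by
          apply Finset.card_le_one.mpr
          intro i hi j hj
          rw [Finset.mem_filter] at hi hj
          rcases lt_trichotomy i j with hij | hij | hij
          · have := hadm.2 i j hij; have := hadm.1 j; omega
          · exact hij
          · have := hadm.2 j i hij; have := hadm.1 i; omega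
        have hc2 : (Finset.univ.filter (fun i : Fin n => (f i).1 = c+1)).card ≤ 1 := by
          apply Finset.card_le_one.mpr
          intro i hi j hj
          rw [Finset.mem_filter] at hi hj
          rcases lt_trichotomy i j with hij | hij | hij
          · have := hadm.2 i j hij; have := hadm.1 i; omega
          · exact hij
          · have := hadm.2 j i hij; have := hadm.1 j; omega
        have hcc : (Finset.univ.filter (fun i : Fin n => (f i).2 = c ∨ (f i).1 = c+1)).card ≤ 2 := by
          rw [hsub]
          calc _ ≤ _ := Finset.card_union_le _ _
            _ ≤ 2 := by omega
        have ht2 : (0:ℝ) ≤ 2*t + t^2 := by nlinarith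
        have : ((Finset.univ.filter (fun i : Fin n => (f i).2 = c ∨ (f i).1 = c+1)).card : ℝ) ≤ 2 := by
          exact_mod_cast hcc
        rw [nsmul_eq_mul]
        exact mul_le_mul_of_nonneg_right this ht2
      have hsplitb := split_bound hx hadm (c+1) hsplit
      rw [hestSq] at hsplitb
      calc (∑ i, (SX i + SY i)^2) ≤ _ := hsum1
        _ ≤ (Lv x (c+1) + Rv x (c+1)) + 2 * (2*t + t^2) := add_le_add hsplitb hcard
        _ ≤ 1 := by nlinarith
  calc Real.sqrt (∑ i, (∑ k ∈ Finset.Icc (f i).1 (f i).2, (x + ptb c τ) k)^2)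
      = Real.sqrt (∑ i, (SX i + SY i)^2) := by rw [key]
    _ ≤ Real.sqrt 1 := Real.sqrt_le_sqrt hmain
    _ = 1 := Real.sqrt_one

def ptb0 (τ : ℝ) : ℕ → ℝ := fun k => if k = 0 then τ else 0

lemma ptb0_sum (τ : ℝ) (a b : ℕ) :
    ∑ k ∈ Finset.Icc a b, ptb0 τ k = if a = 0 then τ else 0 := by
  rw [show (fun k => ptb0 τ k) = fun k => if k = 0 then τ else 0 from rfl]
  rw [Finset.sum_ite_eq' (Finset.Icc a b) 0 (fun _ => τ)]
  simp only [Finset.mem_Icc]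
  congr 1
  simp only [eq_iff_iff]
  omega

lemma neg_ptb0 (τ : ℝ) : ptb0 (-τ) = -ptb0 τ := by
  funext k
  simp only [ptb0, Pi.neg_apply]
  by_cases h : k = 0 <;> simp [h]

set_option maxHeartbeats 1000000 in
lemma pert_est0 {x : ℕ → ℝ} (hx : MemJ x) (hjn : jamesNorm x ≤ 1)
    (t τ : ℝ) (ht : 0 < t) (ht1 : t ≤ 1) (hτ : |τ| ≤ t)
    (ht3 : jamesNorm x ^ 2 + 3*t ≤ 1) :
    ∀ r ∈ estimates (x + ptb0 τ), r ≤ 1 := by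
  rintro r ⟨n, f, hadm, rfl⟩
  set SX : Fin n → ℝ := fun i => ∑ k ∈ Finset.Icc (f i).1 (f i).2, x k with hSX
  set SY : Fin n → ℝ := fun i => ∑ k ∈ Finset.Icc (f i).1 (f i).2, ptb0 τ k with hSY
  have key : (∑ i, (∑ k ∈ Finset.Icc (f i).1 (f i).2, (x + ptb0 τ) k)^2)
      = ∑ i, (SX i + SY i)^2 := by
    apply Finset.sum_congr rfl
    intro i _
    congr 1
    simp only [Pi.add_apply, hSX, hSY]
    exact Finset.sum_add_distrib
  have hestSq : estSq x n f = ∑ i, (SX i)^2 := rfl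
  have hSYval : ∀ i : Fin n, SY i = if (f i).1 = 0 then τ else 0 := fun i => ptb0_sum τ _ _
  have hterm : ∀ i : Fin n, (SX i + SY i)^2 ≤
      (SX i)^2 + (if (f i).1 = 0 then 2*t + t^2 else 0) := by
    intro i
    by_cases hflag : (f i).1 = 0
    · rw [if_pos hflag]
      have hySy : |SY i| ≤ t := by
        rw [hSYval i, if_pos hflag]
        exact hτ
      have hxSx : |SX i| ≤ 1 := le_trans (abs_intSum_le hx _ _) hjn
      have hSy2 : (SY i)^2 ≤ t^2 := by
        rw [← sq_abs]
        nlinarith [abs_nonneg (SY i)]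
      have hcross : SX i * SY i ≤ t := by
        calc SX i * SY i ≤ |SX i * SY i| := le_abs_self _
          _ = |SX i| * |SY i| := abs_mul _ _
          _ ≤ 1 * t := mul_le_mul hxSx hySy (abs_nonneg _) (by norm_num)
          _ = t := one_mul t
      nlinarith
    · rw [if_neg hflag, hSYval i, if_neg hflag]
      simp
  have hsum1 : (∑ i, (SX i + SY i)^2) ≤
      (∑ i, (SX i)^2) + ∑ i, (if (f i).1 = 0 then 2*t + t^2 else 0) := by
    rw [← Finset.sum_add_distrib]
    exact Finset.sum_le_sum (fun i _ => hterm i)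
  have hcard : (∑ i : Fin n, (if (f i).1 = 0 then 2*t + t^2 else 0)) ≤ 1 * (2*t + t^2) := by
    classical
    rw [Finset.sum_ite, Finset.sum_const, Finset.sum_const_zero, add_zero]
    have hc1 : (Finset.univ.filter (fun i : Fin n => (f i).1 = 0)).card ≤ 1 := by
      apply Finset.card_le_one.mpr
      intro i hi j hj
      rw [Finset.mem_filter] at hi hj
      rcases lt_trichotomy i j with hij | hij | hij
      · have := hadm.2 i j hij; have := hadm.1 i; omega
      · exact hij
      · have := hadm.2 j i hij; have := hadm.1 j; omega
    have ht2 : (0:ℝ) ≤ 2*t + t^2 := by nlinarith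
    have hcast : ((Finset.univ.filter (fun i : Fin n => (f i).1 = 0)).card : ℝ) ≤ 1 := by
      exact_mod_cast hc1
    rw [nsmul_eq_mul]
    exact mul_le_mul_of_nonneg_right hcast ht2
  have hjj := estSq_le hx hadm
  rw [hestSq] at hjj
  have hmain : (∑ i, (SX i + SY i)^2) ≤ 1 := by
    calc (∑ i, (SX i + SY i)^2) ≤ _ := hsum1
      _ ≤ jamesNorm x ^ 2 + 1 * (2*t + t^2) := add_le_add hjj hcard
      _ ≤ 1 := by nlinarith
  calc Real.sqrt (∑ i, (∑ k ∈ Finset.Icc (f i).1 (f i).2, (x + ptb0 τ) k)^2)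
      = Real.sqrt (∑ i, (SX i + SY i)^2) := by rw [key]
    _ ≤ Real.sqrt 1 := Real.sqrt_le_sqrt hmain
    _ = 1 := Real.sqrt_one

lemma mk_ball {z : ℕ → ℝ} (h : ∀ r ∈ estimates z, r ≤ 1) : z ∈ ballJ :=
  ⟨⟨1, fun r hr => h r hr⟩, csSup_le (estimates_nonempty z) h⟩

lemma perturb_zero {x y : ℕ → ℝ} (hext : x ∈ Set.extremePoints ℝ ballJ)
    (h₁ : x + y ∈ ballJ) (h₂ : x + (-y) ∈ ballJ) : y = 0 := by
  have hseg : x ∈ openSegment ℝ (x + y) (x + (-y)) := by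
    refine ⟨1/2, 1/2, by norm_num, by norm_num, by norm_num, ?_⟩
    funext k
    simp only [Pi.add_apply, Pi.smul_apply, Pi.neg_apply, smul_eq_mul]
    ring
  have h3 : x + y = x := (hext.2 h₁ h₂ hseg)
  funext k
  have := congrFun h3 k
  simp only [Pi.add_apply] at this
  simpa using this

lemma extreme_jn {x : ℕ → ℝ} (hx : MemJ x) (hext : x ∈ Set.extremePoints ℝ ballJ) :
    jamesNorm x = 1 := by
  have hle : jamesNorm x ≤ 1 := hext.1.2
  by_contra h
  have hlt : jamesNorm x < 1 := lt_of_le_of_ne hle h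
  have hjn0 := jamesNorm_nonneg hx
  set t := (1 - jamesNorm x ^ 2)/3 with htdef
  have ht : 0 < t := by rw [htdef]; nlinarith
  have ht1 : t ≤ 1 := by rw [htdef]; nlinarith
  have ht3 : jamesNorm x ^ 2 + 3*t ≤ 1 := by rw [htdef]; ring_nf; nlinarith
  have h1 := pert_est0 hx hle t t ht ht1 (by rw [abs_of_pos ht]) ht3
  have h2 := pert_est0 hx hle t (-t) ht ht1 (by rw [abs_neg, abs_of_pos ht]) ht3
  have hb1 : x + ptb0 t ∈ ballJ := mk_ball h1
  have hb2 : x + (- ptb0 t) ∈ ballJ := by rw [← neg_ptb0]; exact mk_ball h2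
  have hy := perturb_zero hext hb1 hb2
  have h4 := congrFun hy 0
  rw [show ptb0 t 0 = t from if_pos rfl, Pi.zero_apply] at h4
  linarith

lemma cut_LR {x : ℕ → ℝ} (hx : MemJ x) (hext : x ∈ Set.extremePoints ℝ ballJ) (c : ℕ) :
    1 ≤ Lv x (c+1) + Rv x (c+1) := by
  by_contra h
  push_neg at h
  have hjn : jamesNorm x ≤ 1 := hext.1.2
  have hL0 := Lv_nonneg hx (c+1)
  have hR0 := Rv_nonneg hx (c+1)
  set t := (1 - (Lv x (c+1) + Rv x (c+1)))/6 with htdef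
  have ht : 0 < t := by rw [htdef]; linarith
  have ht1 : t ≤ 1 := by rw [htdef]; linarith
  have ht6 : Lv x (c+1) + Rv x (c+1) + 6*t ≤ 1 := by rw [htdef]; ring_nf; linarith
  have h1 := pert_est hx hjn c t t ht ht1 (by rw [abs_of_pos ht]) ht6
  have h2 := pert_est hx hjn c t (-t) ht ht1 (by rw [abs_neg, abs_of_pos ht]) ht6
  have hb1 : x + ptb c t ∈ ballJ := mk_ball h1
  have hb2 : x + (- ptb c t) ∈ ballJ := by rw [← neg_ptb]; exact mk_ball h2
  have hy := perturb_zero hext hb1 hb2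
  have h4 := congrFun hy c
  rw [show ptb c t c = t from if_pos rfl, Pi.zero_apply] at h4
  linarith

lemma cut_eq {x : ℕ → ℝ} (hx : MemJ x) (hext : x ∈ Set.extremePoints ℝ ballJ)
    (hjn : jamesNorm x = 1) : ∀ c, Lv x c + Rv x c = sSup (ChainsSet x) := by
  have hC : sSup (ChainsSet x) = 1 := by rw [sSup_ChainsSet_eq hx, hjn]; norm_num
  intro c
  cases c with
  | zero => rw [Lv_zero, Rv_zero, zero_add]
  | succ c =>
    rw [hC]
    refine le_antisymm ?_ (cut_LR hx hext c)
    have := Lv_add_Rv_le hx (c+1)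
    rwa [hC] at this

lemma Lv_le_one {x : ℕ → ℝ} (hx : MemJ x) (c : ℕ) : Lv x c ≤ sSup (ChainsSet x) :=
  csSup_le_csSup (bddAbove_ChainsSet hx) ⟨0, zero_mem_LSet x c⟩ (LSet_subset x c)

lemma forward_dir {x : ℕ → ℝ} (hx : MemJ x) (hext : x ∈ Set.extremePoints ℝ ballJ) :
    jamesNorm x = 1 ∧ l2Norm x = 1 := by
  have hjn : jamesNorm x = 1 := extreme_jn hx hext
  refine ⟨hjn, ?_⟩
  have hcut := cut_eq hx hext hjn
  have hC : sSup (ChainsSet x) = 1 := by rw [sSup_ChainsSet_eq hx, hjn]; norm_num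
  have hLeq : ∀ N, Lv x N = ∑ k ∈ Finset.range N, x k ^ 2 := by
    intro N
    induction N with
    | zero => rw [Lv_zero, Finset.sum_range_zero]
    | succ N ih =>
      refine le_antisymm ?_ ?_
      · rw [Finset.sum_range_succ, ← ih]
        exact claimB hx hcut N
      · rw [Finset.sum_range_succ, ← ih]
        exact Lv_superadd hx N
  have hsummable := summable_sq hx
  have htsum : ∑' k, x k ^ 2 = 1 := by
    refine le_antisymm ?_ ?_
    · apply Summable.tsum_le_of_sum_range_le hsummable
      intro N
      rw [← hLeq N]
      have := Lv_le_one hx N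
      rwa [hC] at this
    · by_contra hcon
      push_neg at hcon
      have : ∑' k, x k ^ 2 < sSup (ChainsSet x) := by rwa [hC]
      obtain ⟨v, hvmem, hv⟩ := exists_lt_of_lt_csSup ⟨0, zero_mem_ChainsSet x⟩ this
      obtain ⟨m, g, hg, rfl⟩ := hvmem
      have h1 : cval x m g ≤ Lv x (g m) := le_Lv hx ⟨m, g, hg, le_refl _, rfl⟩
      have h2 : Lv x (g m) = ∑ k ∈ Finset.range (g m), x k ^ 2 := hLeq (g m)
      have h3 : ∑ k ∈ Finset.range (g m), x k ^ 2 ≤ ∑' k, x k ^ 2 :=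
        Summable.sum_le_tsum _ (fun k _ => sq_nonneg _) hsummable
      linarith
  rw [l2Norm, htsum, Real.sqrt_one]

lemma backward_dir {x : ℕ → ℝ} (hx : MemJ x) (hj : jamesNorm x = 1) (hl : l2Norm x = 1) :
    x ∈ Set.extremePoints ℝ ballJ := by
  have hxball : x ∈ ballJ := ⟨hx, le_of_eq hj⟩
  refine ⟨hxball, ?_⟩
  intro x₁ h₁ x₂ h₂ hseg
  obtain ⟨a, b, ha, hb, hab, hcomb⟩ := hseg
  have hs1 : Summable (fun k => x₁ k ^ 2) := summable_sq h₁.1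
  have hs2 : Summable (fun k => x₂ k ^ 2) := summable_sq h₂.1
  have hsx : Summable (fun k => x k ^ 2) := summable_sq hx
  have hT1 : ∑' k, x₁ k ^ 2 ≤ 1 := by
    have h3 := tsum_sq_le h₁.1
    nlinarith [jamesNorm_nonneg h₁.1, h₁.2]
  have hT2 : ∑' k, x₂ k ^ 2 ≤ 1 := by
    have h3 := tsum_sq_le h₂.1
    nlinarith [jamesNorm_nonneg h₂.1, h₂.2]
  have hTx : ∑' k, x k ^ 2 = 1 := Real.sqrt_eq_one.mp hl
  have hD : Summable (fun k => (x₁ k - x₂ k) ^ 2) := by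
    apply Summable.of_nonneg_of_le (fun k => sq_nonneg _)
      (fun k => by nlinarith [sq_nonneg (x₁ k + x₂ k)])
      ((hs1.mul_left 2).add (hs2.mul_left 2))
  have hident : ∀ k, x k ^ 2 + (a*b) * (x₁ k - x₂ k) ^ 2 = a * x₁ k ^ 2 + b * x₂ k ^ 2 := by
    intro k
    have hk := congrFun hcomb k
    simp only [Pi.add_apply, Pi.smul_apply, smul_eq_mul] at hk
    linear_combination (-(x k + a * x₁ k + b * x₂ k)) * hk + (a * x₁ k ^ 2 + b * x₂ k ^ 2) * hab
  have hsum_eq : (∑' k, x k ^ 2) + (a*b) * (∑' k, (x₁ k - x₂ k) ^ 2)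
      = a * (∑' k, x₁ k ^ 2) + b * (∑' k, x₂ k ^ 2) := by
    have h1 : ∑' k, (x k ^ 2 + (a*b) * (x₁ k - x₂ k) ^ 2)
        = ∑' k, (a * x₁ k ^ 2 + b * x₂ k ^ 2) := tsum_congr hident
    rw [Summable.tsum_add hsx (hD.mul_left _), tsum_mul_left,
      Summable.tsum_add (hs1.mul_left a) (hs2.mul_left b), tsum_mul_left, tsum_mul_left] at h1
    exact h1
  have hDval : ∑' k, (x₁ k - x₂ k) ^ 2 ≤ 0 := by
    have hA : a * (∑' k, x₁ k ^ 2) ≤ a := by nlinarith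
    have hB : b * (∑' k, x₂ k ^ 2) ≤ b := by nlinarith
    nlinarith [mul_pos ha hb]
  have hD0 : ∀ k, (x₁ k - x₂ k) ^ 2 = 0 := by
    intro k
    have hle := Summable.le_tsum hD k (fun j _ => sq_nonneg _)
    nlinarith [sq_nonneg (x₁ k - x₂ k)]
  have hx12 : x₁ = x₂ := by
    funext k
    have := sq_eq_zero_iff.mp (hD0 k)
    linarith
  have hx2x : x₂ = x := by
    rw [hx12] at hcomb
    funext k
    have hk := congrFun hcomb k
    simp only [Pi.add_apply, Pi.smul_apply, smul_eq_mul] at hk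
    linear_combination hk - x₂ k * hab
  exact hx12.trans hx2x

end JamesAux

theorem stmt3 (x : ℕ → ℝ) (hx : MemJ x) :
    x ∈ Set.extremePoints ℝ ballJ ↔ jamesNorm x = 1 ∧ l2Norm x = 1 := by
  constructor
  · intro hext
    exact JamesAux.forward_dir hx hext
  · rintro ⟨hj, hl⟩
    exact JamesAux.backward_dir hx hj hl

end
end

section
/- Let x ∈ ℓ² with ‖x‖₂ = 1. Then x is an extreme point of the unit ball of the James space J if and only if for every interval I of ℕ one has |∑_{n∈I} x(n)|² ≤ ∑_{n∈I} |x(n)|². -/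
open Filter Topology Classical

/- ===== auxiliary lemmas ===== -/

private lemma mem_estimates {x : ℕ → ℝ} {n : ℕ} {f : Fin n → ℕ × ℕ} (h : Admissible n f) :
    Real.sqrt (∑ i, (∑ k ∈ Finset.Icc (f i).1 (f i).2, x k) ^ 2) ∈ estimates x :=
  ⟨n, f, h, rfl⟩

private lemma est_sum_le {x : ℕ → ℝ} (hmem : MemJ x) (hJ : jamesNorm x ≤ 1) {n : ℕ}
    {f : Fin n → ℕ × ℕ} (h : Admissible n f) :
    ∑ i, (∑ k ∈ Finset.Icc (f i).1 (f i).2, x k) ^ 2 ≤ 1 := by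
  have h0 : (0:ℝ) ≤ ∑ i, (∑ k ∈ Finset.Icc (f i).1 (f i).2, x k) ^ 2 :=
    Finset.sum_nonneg fun i _ => sq_nonneg _
  have hr : Real.sqrt (∑ i, (∑ k ∈ Finset.Icc (f i).1 (f i).2, x k) ^ 2) ≤ 1 :=
    le_trans (le_csSup hmem (mem_estimates h)) hJ
  nlinarith [Real.sq_sqrt h0,
    Real.sqrt_nonneg (∑ i, (∑ k ∈ Finset.Icc (f i).1 (f i).2, x k) ^ 2)]

private lemma ballJ_sq {y : ℕ → ℝ} (hy : y ∈ ballJ) :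
    Summable (fun k => y k ^ 2) ∧ ∑' k, y k ^ 2 ≤ 1 := by
  have key : ∀ N : ℕ, ∑ k ∈ Finset.range N, y k ^ 2 ≤ 1 := by
    intro N
    have hadm : Admissible N (fun i : Fin N => ((i : ℕ), (i : ℕ))) :=
      ⟨fun i => le_rfl, fun i j hij => hij⟩
    have est := est_sum_le hy.1 hy.2 hadm
    have hconv : ∑ k ∈ Finset.range N, y k ^ 2
        = ∑ i : Fin N, (∑ k ∈ Finset.Icc ((fun i : Fin N => ((i : ℕ), (i : ℕ))) i).1
            ((fun i : Fin N => ((i : ℕ), (i : ℕ))) i).2, y k) ^ 2 := by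
      rw [← Fin.sum_univ_eq_sum_range (fun k => y k ^ 2) N]
      all_goals exact Finset.sum_congr rfl fun i _ => by simp
    rw [hconv]; exact est
  exact ⟨summable_of_sum_range_le (fun n => sq_nonneg _) key,
    Summable.tsum_le_of_sum_range_le (summable_of_sum_range_le (fun n => sq_nonneg _) key) key⟩

private lemma partial_eq (x : ℕ → ℝ) (I : Set ℕ) :
    (fun N => ∑ k ∈ Finset.range N, if k ∈ I then x k else 0)
      = fun N => ∑ k ∈ Finset.range N, I.indicator x k := by
  funext N
  exact Finset.sum_congr rfl fun k _ => (Set.indicator_apply I x k).symm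

private lemma setSum_Icc (x : ℕ → ℝ) (a b : ℕ) :
    setSum x (Set.Icc a b) = ∑ k ∈ Finset.Icc a b, x k := by
  unfold setSum
  rw [partial_eq]
  apply Filter.Tendsto.limUnder_eq
  apply Filter.Tendsto.congr' _ tendsto_const_nhds
  filter_upwards [eventually_ge_atTop (b + 1)] with N hN
  have h1 : Finset.Icc a b ⊆ Finset.range N := by
    intro k hk; rw [Finset.mem_Icc] at hk; rw [Finset.mem_range]; omega
  have h2 : ∀ k ∈ Finset.range N, k ∉ Finset.Icc a b → (Set.Icc a b).indicator x k = 0 := by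
    intro k _ hk2
    refine Set.indicator_of_notMem ?_ x
    rw [Finset.mem_Icc] at hk2
    simpa [Set.mem_Icc] using hk2
  rw [← Finset.sum_subset h1 h2]
  exact Finset.sum_congr rfl fun k hk =>
    (Set.indicator_of_mem (Set.mem_Icc.mpr (Finset.mem_Icc.mp hk)) x).symm

private lemma tsum_Icc_sq (x : ℕ → ℝ) (a b : ℕ) :
    ∑' n : (Set.Icc a b : Set ℕ), (x (n : ℕ)) ^ 2 = ∑ k ∈ Finset.Icc a b, x k ^ 2 := by
  rw [← Finset.coe_Icc]
  exact Finset.tsum_subtype _ (fun k => x k ^ 2)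

private lemma sum_range_add' (f : ℕ → ℝ) (m n : ℕ) :
    ∑ i ∈ Finset.range (m + n), f i
      = ∑ i ∈ Finset.range m, f i + ∑ i ∈ Finset.range n, f (m + i) := by
  induction n with
  | zero => simp
  | succ n ih =>
      rw [Nat.add_succ, Finset.sum_range_succ, ih, Finset.sum_range_succ]
      ring

private def auxF1 (a b i : ℕ) : ℕ := if i < a then i else if i = a then a else b + (i - a)
private def auxF2 (a b i : ℕ) : ℕ := if i < a then i else if i = a then b else b + (i - a)

private lemma finite_NPR (x : ℕ → ℝ) (hmem : MemJ x) (hJ : jamesNorm x ≤ 1)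
    (hsum : Summable (fun k => (x k) ^ 2)) (h1 : ∑' k, (x k) ^ 2 = 1) (a b : ℕ) :
    (∑ k ∈ Finset.Icc a b, x k) ^ 2 ≤ ∑ k ∈ Finset.Icc a b, x k ^ 2 := by
  rcases lt_or_ge b a with hab | hab
  · simp [Finset.Icc_eq_empty_of_lt hab]
  by_contra hcon
  push_neg at hcon
  set δ : ℝ := (∑ k ∈ Finset.Icc a b, x k) ^ 2 - ∑ k ∈ Finset.Icc a b, x k ^ 2 with hδ
  have hδpos : 0 < δ := sub_pos.mpr hcon
  have htend : Filter.Tendsto (fun N => ∑ k ∈ Finset.range N, x k ^ 2) atTop (𝓝 1) := by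
    rw [← h1]; exact hsum.hasSum.tendsto_sum_nat
  have hev : ∀ᶠ N in atTop, 1 - δ / 2 < ∑ k ∈ Finset.range N, x k ^ 2 :=
    htend.eventually (eventually_gt_nhds (by linarith))
  obtain ⟨N, hN1, hN2⟩ := (hev.and (eventually_ge_atTop (b + 1))).exists
  set t : ℕ := N - (b + 1) with ht
  have hNt : N = (b + 1) + t := by omega
  have hadm : Admissible (a + 1 + t) (fun i : Fin (a + 1 + t) => (auxF1 a b i, auxF2 a b i)) := by
    constructor
    · intro i
      show auxF1 a b i ≤ auxF2 a b i
      unfold auxF1 auxF2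
      split_ifs <;> omega
    · intro i j hij
      have hij' : (i : ℕ) < (j : ℕ) := hij
      show auxF2 a b i < auxF1 a b j
      unfold auxF1 auxF2
      split_ifs <;> omega
  have est := est_sum_le hmem hJ hadm
  set G : ℕ → ℝ := fun i => (∑ k ∈ Finset.Icc (auxF1 a b i) (auxF2 a b i), x k) ^ 2 with hG
  have hest : ∑ i ∈ Finset.range (a + 1 + t), G i ≤ 1 := by
    have hconv : ∑ i ∈ Finset.range (a + 1 + t), G i
        = ∑ i : Fin (a + 1 + t),
            (∑ k ∈ Finset.Icc ((fun i : Fin (a + 1 + t) => (auxF1 a b i, auxF2 a b i)) i).1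
              ((fun i : Fin (a + 1 + t) => (auxF1 a b i, auxF2 a b i)) i).2, x k) ^ 2 := by
      rw [← Fin.sum_univ_eq_sum_range G (a + 1 + t)]
      all_goals exact Finset.sum_congr rfl fun i _ => rfl
    rw [hconv]; exact est
  have hsplit : ∑ i ∈ Finset.range (a + 1 + t), G i
      = (∑ i ∈ Finset.range a, G i) + G a + ∑ j ∈ Finset.range t, G (a + 1 + j) := by
    rw [sum_range_add' G (a + 1) t, Finset.sum_range_succ]
  have e1 : ∑ i ∈ Finset.range a, G i = ∑ i ∈ Finset.range a, x i ^ 2 := by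
    refine Finset.sum_congr rfl fun i hi => ?_
    rw [Finset.mem_range] at hi
    have f1 : auxF1 a b i = i := by unfold auxF1; rw [if_pos hi]
    have f2 : auxF2 a b i = i := by unfold auxF2; rw [if_pos hi]
    rw [hG]
    simp only [f1, f2, Finset.Icc_self, Finset.sum_singleton]
  have ea : G a = (∑ k ∈ Finset.Icc a b, x k) ^ 2 := by
    have f1 : auxF1 a b a = a := by unfold auxF1; simp
    have f2 : auxF2 a b a = b := by unfold auxF2; simp
    rw [hG]; simp only [f1, f2]
  have e3 : ∑ j ∈ Finset.range t, G (a + 1 + j)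
      = ∑ j ∈ Finset.range t, x (b + 1 + j) ^ 2 := by
    refine Finset.sum_congr rfl fun j _ => ?_
    have f1 : auxF1 a b (a + 1 + j) = b + 1 + j := by
      unfold auxF1; rw [if_neg (by omega), if_neg (by omega)]; omega
    have f2 : auxF2 a b (a + 1 + j) = b + 1 + j := by
      unfold auxF2; rw [if_neg (by omega), if_neg (by omega)]; omega
    rw [hG]
    simp only [f1, f2, Finset.Icc_self, Finset.sum_singleton]
  have e4 : ∑ i ∈ Finset.range a, x i ^ 2 + ∑ k ∈ Finset.Icc a b, x k ^ 2
      = ∑ i ∈ Finset.range (b + 1), x i ^ 2 := by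
    rw [Finset.range_eq_Ico, Finset.range_eq_Ico, ← Finset.Ico_add_one_right_eq_Icc a b]
    exact Finset.sum_Ico_consecutive (fun k => x k ^ 2) (Nat.zero_le a) (by omega)
  have e5 : ∑ i ∈ Finset.range (b + 1), x i ^ 2 + ∑ j ∈ Finset.range t, x (b + 1 + j) ^ 2
      = ∑ i ∈ Finset.range N, x i ^ 2 := by
    rw [hNt]; exact (sum_range_add' (fun k => x k ^ 2) (b + 1) t).symm
  have etot : ∑ i ∈ Finset.range (a + 1 + t), G i = ∑ i ∈ Finset.range N, x i ^ 2 + δ := by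
    rw [hsplit, e1, e3, ea]
    have hsq : (∑ k ∈ Finset.Icc a b, x k) ^ 2 = ∑ k ∈ Finset.Icc a b, x k ^ 2 + δ := by
      rw [hδ]; ring
    rw [hsq]
    linear_combination e4 + e5
  rw [etot] at hest
  linarith

private lemma S_diff (x : ℕ → ℝ) (a m n : ℕ) (h : m < n) :
    (∑ k ∈ Finset.range n, (Set.Ici a).indicator x k)
      - (∑ k ∈ Finset.range m, (Set.Ici a).indicator x k)
      = ∑ k ∈ Finset.Icc (max a m) (n - 1), x k := by
  have hsub : ∑ k ∈ Finset.range m, (Set.Ici a).indicator x k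
      + ∑ k ∈ Finset.Ico m n, (Set.Ici a).indicator x k
      = ∑ k ∈ Finset.range n, (Set.Ici a).indicator x k := by
    rw [Finset.range_eq_Ico, Finset.range_eq_Ico]
    exact Finset.sum_Ico_consecutive ((Set.Ici a).indicator x) (Nat.zero_le m) h.le
  have hmid : ∑ k ∈ Finset.Ico m n, (Set.Ici a).indicator x k
      = ∑ k ∈ Finset.Icc (max a m) (n - 1), x k := by
    have hss : Finset.Icc (max a m) (n - 1) ⊆ Finset.Ico m n := by
      intro k hk; rw [Finset.mem_Icc] at hk; rw [Finset.mem_Ico]; omega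
    have hz : ∀ k ∈ Finset.Ico m n, k ∉ Finset.Icc (max a m) (n - 1) →
        (Set.Ici a).indicator x k = 0 := by
      intro k hk hk2
      rw [Finset.mem_Ico] at hk; rw [Finset.mem_Icc] at hk2
      refine Set.indicator_of_notMem ?_ x
      rw [Set.mem_Ici]
      omega
    rw [← Finset.sum_subset hss hz]
    refine Finset.sum_congr rfl fun k hk => ?_
    rw [Finset.mem_Icc] at hk
    exact Set.indicator_of_mem (Set.mem_Ici.mpr (le_trans (le_max_left a m) hk.1)) x
  linarith [hsub, hmid]

private lemma tail_cauchy (x : ℕ → ℝ) (hmem : MemJ x) (hJ : jamesNorm x ≤ 1) (a : ℕ) :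
    CauchySeq (fun N => ∑ k ∈ Finset.range N, (Set.Ici a).indicator x k) := by
  by_contra hnc
  rw [Metric.cauchySeq_iff] at hnc
  push_neg at hnc
  obtain ⟨ε, hε, hkey⟩ := hnc
  have key : ∀ N : ℕ, ∃ uv : ℕ × ℕ, N ≤ uv.1 ∧ uv.1 ≤ uv.2 ∧
      ε ^ 2 ≤ (∑ k ∈ Finset.Icc uv.1 uv.2, x k) ^ 2 := by
    intro N
    obtain ⟨m, hm, n, hn, hd⟩ := hkey N
    have main : ∀ p q : ℕ, N ≤ p → p < q →
        ε ≤ |(∑ k ∈ Finset.range q, (Set.Ici a).indicator x k)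
              - (∑ k ∈ Finset.range p, (Set.Ici a).indicator x k)| →
        ∃ uv : ℕ × ℕ, N ≤ uv.1 ∧ uv.1 ≤ uv.2 ∧
          ε ^ 2 ≤ (∑ k ∈ Finset.Icc uv.1 uv.2, x k) ^ 2 := by
      intro p q hp hpq habs
      rw [S_diff x a p q hpq] at habs
      refine ⟨(max a p, q - 1), le_trans hp (le_max_right a p), ?_, ?_⟩
      · by_contra hle
        push_neg at hle
        rw [Finset.Icc_eq_empty (by omega)] at habs
        simp only [Finset.sum_empty, abs_zero] at habs
        linarith
      · calc ε ^ 2 ≤ |∑ k ∈ Finset.Icc (max a p) (q - 1), x k| ^ 2 :=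
              pow_le_pow_left₀ hε.le habs 2
          _ = (∑ k ∈ Finset.Icc (max a p) (q - 1), x k) ^ 2 := sq_abs _
    rcases lt_trichotomy m n with hlt | heq | hgt
    · exact main m n hm hlt (by rw [Real.dist_eq, abs_sub_comm] at hd; exact hd)
    · exfalso; rw [heq, dist_self] at hd; linarith
    · exact main n m hn hgt (by rw [Real.dist_eq] at hd; exact hd)
  choose c hc1 hc2 hc3 using key
  set g : ℕ → ℕ × ℕ := fun i => Nat.rec (c 0) (fun _ p => c (p.2 + 1)) i with hgdef
  have hgs : ∀ i, g (i + 1) = c ((g i).2 + 1) := fun i => rfl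
  have hg12 : ∀ i, (g i).1 ≤ (g i).2 := by
    intro i
    cases i with
    | zero => exact hc2 0
    | succ i => rw [hgs]; exact hc2 _
  have hgsq : ∀ i, ε ^ 2 ≤ (∑ k ∈ Finset.Icc (g i).1 (g i).2, x k) ^ 2 := by
    intro i
    cases i with
    | zero => exact hc3 0
    | succ i => rw [hgs]; exact hc3 _
  have hstep : ∀ i, (g i).2 < (g (i + 1)).1 := by
    intro i
    rw [hgs]
    have := hc1 ((g i).2 + 1)
    omega
  have hmono : ∀ j i, i < j → (g i).2 < (g j).1 := by
    intro j
    induction j with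
    | zero => intro i h; exact absurd h (Nat.not_lt_zero i)
    | succ j ih =>
        intro i h
        rcases Nat.lt_succ_iff_lt_or_eq.mp h with h' | h'
        · exact lt_trans (lt_of_lt_of_le (ih i h') (hg12 j)) (hstep j)
        · rw [h']; exact hstep j
  obtain ⟨n, hn⟩ := exists_nat_gt (1 / ε ^ 2)
  have hε2 : 0 < ε ^ 2 := by positivity
  have hn1 : 1 < (n : ℝ) * ε ^ 2 := (div_lt_iff₀ hε2).mp hn
  have hadm : Admissible n (fun i : Fin n => g i) :=
    ⟨fun i => hg12 _, fun i j hij => hmono _ _ hij⟩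
  have hle := est_sum_le hmem hJ hadm
  have hge : (n : ℝ) * ε ^ 2
      ≤ ∑ i : Fin n, (∑ k ∈ Finset.Icc ((fun i : Fin n => g i) i).1
          ((fun i : Fin n => g i) i).2, x k) ^ 2 := by
    calc (n : ℝ) * ε ^ 2 = ∑ _i : Fin n, ε ^ 2 := by
          rw [Finset.sum_const, Finset.card_univ, Fintype.card_fin, nsmul_eq_mul]
      _ ≤ _ := Finset.sum_le_sum fun i _ => hgsq (i : ℕ)
  have : (n : ℝ) * ε ^ 2 ≤ 1 := le_trans hge hle
  linarith

private lemma Icc_le_tsum_Ici (x : ℕ → ℝ) (hsum : Summable (fun k => (x k) ^ 2)) (a m : ℕ) :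
    ∑ k ∈ Finset.Icc a m, x k ^ 2 ≤ ∑' n : (Set.Ici a : Set ℕ), (x (n : ℕ)) ^ 2 := by
  have h1 : ∑ k ∈ Finset.Icc a m, x k ^ 2
      = ∑ k ∈ Finset.Icc a m, (Set.Ici a).indicator (fun k => x k ^ 2) k := by
    refine Finset.sum_congr rfl fun k hk => ?_
    rw [Finset.mem_Icc] at hk
    rw [Set.indicator_of_mem (Set.mem_Ici.mpr hk.1)]
  rw [h1]
  exact le_of_le_of_eq
    (Summable.sum_le_tsum (Finset.Icc a m)
      (fun k _ => Set.indicator_nonneg (fun j _ => sq_nonneg _) k) (hsum.indicator _))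
    (tsum_subtype (Set.Ici a) (fun k => x k ^ 2)).symm

theorem stmt5 (x : ℕ → ℝ) (hsum : Summable (fun k => (x k) ^ 2)) (h2 : l2Norm x = 1) :
    x ∈ Set.extremePoints ℝ ballJ ↔
      ∀ I : Set ℕ, I.OrdConnected →
        (setSum x I) ^ 2 ≤ ∑' n : I, (x (n : ℕ)) ^ 2 := by
  have h1 : ∑' k, (x k) ^ 2 = 1 := by
    unfold l2Norm at h2
    exact Real.sqrt_eq_one.mp h2
  constructor
  · -- extreme point ⇒ hereditarily non-positive remainder
    intro hx I hI
    have hball : x ∈ ballJ := hx.1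
    have hmem : MemJ x := hball.1
    have hJ : jamesNorm x ≤ 1 := hball.2
    rcases I.eq_empty_or_nonempty with rfl | hne
    · have hzero : setSum x (∅ : Set ℕ) = 0 := by
        unfold setSum
        rw [partial_eq]
        have hfun : (fun N => ∑ k ∈ Finset.range N, (∅ : Set ℕ).indicator x k)
            = fun _ : ℕ => (0 : ℝ) := by
          funext N
          simp [Set.indicator_empty]
        rw [hfun]
        exact Filter.Tendsto.limUnder_eq tendsto_const_nhds
      rw [hzero, tsum_empty]
      norm_num
    · by_cases hfin : I.Finite
      · -- finite nonempty interval : I = Icc (sInf I) (sSup I)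
        have haI : sInf I ∈ I := Nat.sInf_mem hne
        have hbI : sSup I ∈ I := Nat.sSup_mem hne hfin.bddAbove
        have hIcc : I = Set.Icc (sInf I) (sSup I) := by
          apply subset_antisymm
          · exact fun k hk => ⟨Nat.sInf_le hk, le_csSup hfin.bddAbove hk⟩
          · exact hI.out haI hbI
        rw [hIcc, setSum_Icc, tsum_Icc_sq]
        exact finite_NPR x hmem hJ hsum h1 _ _
      · -- infinite interval : I = Ici (sInf I)
        have hinf : I.Infinite := hfin
        have haI : sInf I ∈ I := Nat.sInf_mem hne
        have hIci : I = Set.Ici (sInf I) := by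
          apply subset_antisymm
          · exact fun k hk => Nat.sInf_le hk
          · intro k hk
            obtain ⟨b, hbI, hkb⟩ := hinf.exists_gt k
            exact hI.out haI hbI ⟨hk, hkb.le⟩
        set a := sInf I with ha
        rw [hIci]
        obtain ⟨l, hl⟩ := cauchySeq_tendsto_of_complete (tail_cauchy x hmem hJ a)
        have hss : setSum x (Set.Ici a) = l := by
          unfold setSum
          rw [partial_eq]
          exact Filter.Tendsto.limUnder_eq hl
        rw [hss]
        have hsq : Filter.Tendsto
            (fun N => (∑ k ∈ Finset.range N, (Set.Ici a).indicator x k) ^ 2)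
            atTop (𝓝 (l ^ 2)) := hl.pow 2
        refine le_of_tendsto hsq ?_
        filter_upwards [eventually_ge_atTop 1] with N hN
        have hSN : (∑ k ∈ Finset.range N, (Set.Ici a).indicator x k)
            = ∑ k ∈ Finset.Icc a (N - 1), x k := by
          have h0 : (∑ k ∈ Finset.range 0, (Set.Ici a).indicator x k) = 0 := by simp
          have hd := S_diff x a 0 N hN
          rw [h0, sub_zero] at hd
          simpa using hd
        rw [hSN]
        calc (∑ k ∈ Finset.Icc a (N - 1), x k) ^ 2
            ≤ ∑ k ∈ Finset.Icc a (N - 1), x k ^ 2 := finite_NPR x hmem hJ hsum h1 _ _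
          _ ≤ _ := Icc_le_tsum_Ici x hsum a (N - 1)
  · -- hereditarily NPR ⇒ extreme point
    intro H
    have hfinNPR : ∀ a b : ℕ,
        (∑ k ∈ Finset.Icc a b, x k) ^ 2 ≤ ∑ k ∈ Finset.Icc a b, x k ^ 2 := by
      intro a b
      have := H (Set.Icc a b) Set.ordConnected_Icc
      rwa [setSum_Icc, tsum_Icc_sq] at this
    have hub : ∀ r ∈ estimates x, r ≤ 1 := by
      rintro r ⟨n, f, hadm, rfl⟩
      have hdisj : (↑(Finset.univ : Finset (Fin n)) : Set (Fin n)).PairwiseDisjoint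
          (fun i => Finset.Icc (f i).1 (f i).2) := by
        intro i _ j _ hij
        rcases lt_or_gt_of_ne hij with hlt | hgt
        · refine Finset.disjoint_left.mpr fun k hk1 hk2 => ?_
          rw [Finset.mem_Icc] at hk1 hk2
          have := hadm.2 i j hlt
          omega
        · refine Finset.disjoint_left.mpr fun k hk1 hk2 => ?_
          rw [Finset.mem_Icc] at hk1 hk2
          have := hadm.2 j i hgt
          omega
      have hle : ∑ i, (∑ k ∈ Finset.Icc (f i).1 (f i).2, x k) ^ 2 ≤ 1 := by
        calc ∑ i, (∑ k ∈ Finset.Icc (f i).1 (f i).2, x k) ^ 2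
            ≤ ∑ i, ∑ k ∈ Finset.Icc (f i).1 (f i).2, x k ^ 2 :=
              Finset.sum_le_sum fun i _ => hfinNPR _ _
          _ = ∑ k ∈ Finset.univ.biUnion (fun i => Finset.Icc (f i).1 (f i).2), x k ^ 2 :=
              (Finset.sum_biUnion hdisj).symm
          _ ≤ ∑' k, (x k) ^ 2 := Summable.sum_le_tsum _ (fun k _ => sq_nonneg _) hsum
          _ = 1 := h1
      calc Real.sqrt (∑ i, (∑ k ∈ Finset.Icc (f i).1 (f i).2, x k) ^ 2)
          ≤ Real.sqrt 1 := Real.sqrt_le_sqrt hle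
        _ = 1 := Real.sqrt_one
    have hmem : MemJ x := ⟨1, fun r hr => hub r hr⟩
    have hnon : (estimates x).Nonempty :=
      ⟨_, mem_estimates (x := x) (n := 0) (f := fun i => i.elim0)
        ⟨fun i => i.elim0, fun i _ _ => i.elim0⟩⟩
    have hJ : jamesNorm x ≤ 1 := csSup_le hnon hub
    refine ⟨⟨hmem, hJ⟩, ?_⟩
    intro y hy z hz hseg
    obtain ⟨ta, tb, hta, htb, htab, hxyz⟩ := hseg
    have hy2 := ballJ_sq hy
    have hz2 := ballJ_sq hz
    have hid : ∀ k, x k ^ 2 = ta * y k ^ 2 + tb * z k ^ 2 - ta * tb * (y k - z k) ^ 2 := by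
      intro k
      have hk : x k = ta * y k + tb * z k := by
        have := congrFun hxyz k
        simpa [Pi.add_apply, Pi.smul_apply, smul_eq_mul] using this.symm
      have htb' : tb = 1 - ta := by linarith
      rw [hk, htb']; ring
    have Sw : Summable (fun k => (y k - z k) ^ 2) := by
      refine Summable.of_nonneg_of_le (fun k => sq_nonneg _) (fun k => ?_)
        ((hy2.1.mul_left 2).add (hz2.1.mul_left 2))
      nlinarith [sq_nonneg (y k + z k)]
    have hcalc : (1 : ℝ) = ta * (∑' k, y k ^ 2) + tb * (∑' k, z k ^ 2)
        - ta * tb * (∑' k, (y k - z k) ^ 2) := by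
      rw [← h1, tsum_congr hid,
        Summable.tsum_sub ((hy2.1.mul_left ta).add (hz2.1.mul_left tb)) (Sw.mul_left (ta * tb)),
        Summable.tsum_add (hy2.1.mul_left ta) (hz2.1.mul_left tb),
        tsum_mul_left, tsum_mul_left, tsum_mul_left]
    have hWnn : 0 ≤ ∑' k, (y k - z k) ^ 2 := tsum_nonneg fun k => sq_nonneg _
    have hW0 : ∑' k, (y k - z k) ^ 2 ≤ 0 := by
      nlinarith [mul_pos hta htb, hy2.2, hz2.2]
    have hW : ∑' k, (y k - z k) ^ 2 = 0 := le_antisymm hW0 hWnn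
    have hpt : ∀ k, y k = z k := by
      intro k
      have hk := Summable.le_tsum Sw k (fun j _ => sq_nonneg _)
      rw [hW] at hk
      have hz0 : (y k - z k) ^ 2 = 0 := le_antisymm hk (sq_nonneg _)
      have := (pow_eq_zero_iff two_ne_zero).mp hz0
      linarith [sub_eq_zero.mp this]
    have hyz : y = z := funext hpt
    have hyx : y = x := by
      rw [← hxyz, hyz, ← add_smul, htab, one_smul]
    exact hyx
end
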